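/- arXiv:1807.11018 — 7 statements merged into one kernel-verified Lean document; each statement's English description precedes it below -/
import Mathlib

section
/- Let d and k be integers with 1 ≤ k < d, and let t₁, …, t_{2k+2} ∈ ℤ^d be an O_k-configuration. Then ‖t_{i₁} − t_{i₂}‖₁ ≥ 2 for every pair of indices i₁ ≠ i₂. -/
/-- The `ℓ∞` distance between two points of `ℤ^d`, as a natural number. -/
def linfDist {d : ℕ} (x y : Fin d → ℤ) : ℕ :=
  Finset.univ.sup fun i => (x i - y i).natAbs

/-- The `ℓ1` distance between two points of `ℤ^d`, as a natural number. -/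
def l1Dist {d : ℕ} (x y : Fin d → ℤ) : ℕ :=
  ∑ i, (x i - y i).natAbs

/-- A family of `2k+2` distinct points of `ℤ^d` is an `O_k`-configuration if, in the graph on the
indices with an edge exactly when the `ℓ∞` distance is `1`, every index is adjacent to all others
except exactly one. -/
def IsOkConfig (d k : ℕ) (t : Fin (2 * k + 2) → Fin d → ℤ) : Prop :=
  Function.Injective t ∧
    ∀ i : Fin (2 * k + 2), ∃! i' : Fin (2 * k + 2), i' ≠ i ∧ linfDist (t i) (t i') ≠ 1

lemma coord_le_linf {d : ℕ} (x y : Fin d → ℤ) (i : Fin d) :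
    (x i - y i).natAbs ≤ linfDist x y := by
  unfold linfDist
  exact Finset.le_sup (f := fun i => (x i - y i).natAbs) (Finset.mem_univ i)

lemma linf_symm {d : ℕ} (x y : Fin d → ℤ) : linfDist x y = linfDist y x := by
  unfold linfDist
  congr 1
  funext i
  omega

lemma linf_eq_zero {d : ℕ} {x y : Fin d → ℤ} (h : linfDist x y = 0) : x = y := by
  funext i
  have h2 := coord_le_linf x y i
  rw [h, Nat.le_zero, Int.natAbs_eq_zero, sub_eq_zero] at h2
  exact h2

lemma l1_one {d : ℕ} {x y : Fin d → ℤ} (h : l1Dist x y = 1) :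
    ∃ c, (x c - y c).natAbs = 1 ∧ ∀ a, a ≠ c → x a = y a := by
  have hex : ∃ c, (x c - y c).natAbs ≠ 0 := by
    by_contra hc
    push_neg at hc
    have : l1Dist x y = 0 := Finset.sum_eq_zero fun i _ => hc i
    omega
  obtain ⟨c, hc⟩ := hex
  have hsum : (x c - y c).natAbs + ∑ i ∈ Finset.univ.erase c, (x i - y i).natAbs = 1 :=
    (Finset.add_sum_erase Finset.univ (fun i => (x i - y i).natAbs) (Finset.mem_univ c)).trans h
  have hle : (x c - y c).natAbs ≤ 1 :=
    h ▸ Finset.single_le_sum (f := fun i => (x i - y i).natAbs)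
      (fun i _ => Nat.zero_le _) (Finset.mem_univ c)
  have hc1 : (x c - y c).natAbs = 1 := by omega
  refine ⟨c, hc1, fun a ha => ?_⟩
  have hz : ∑ i ∈ Finset.univ.erase c, (x i - y i).natAbs = 0 := by omega
  have := (Finset.sum_eq_zero_iff).mp hz a (Finset.mem_erase.mpr ⟨ha, Finset.mem_univ a⟩)
  rw [Int.natAbs_eq_zero, sub_eq_zero] at this
  exact this

/-- Key step: if `x` and `y` agree off coordinate `c`, `z` is `ℓ∞`-adjacent to `y`
but neither equal nor `ℓ∞`-adjacent to `x`, then `z` is far from `x` in coordinate `c`. -/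
lemma key_far {d : ℕ} {x y z : Fin d → ℤ} {c : Fin d}
    (hxy : ∀ a, a ≠ c → x a = y a) (hyz : linfDist y z = 1)
    (hxz : linfDist x z ≠ 1) (hne : x ≠ z) :
    2 ≤ (z c - x c).natAbs := by
  by_contra h
  push_neg at h
  have hle : linfDist x z ≤ 1 := by
    apply Finset.sup_le
    intro a _
    by_cases hac : a = c
    · subst hac; omega
    · rw [hxy a hac]
      have h2 := coord_le_linf y z a
      omega
  have h0 : linfDist x z ≠ 0 := fun h' => hne (linf_eq_zero h')
  omega

/-- For `1 ≤ k < d`, the points of an `O_k`-configuration in `ℤ^d` have pairwise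
`ℓ1` distances at least `2`. -/
theorem okConfig_pairwise_l1_ge_two (d k : ℕ) (hk : 1 ≤ k) (hkd : k < d)
    (t : Fin (2 * k + 2) → Fin d → ℤ) (ht : IsOkConfig d k t) :
    ∀ i₁ i₂ : Fin (2 * k + 2), i₁ ≠ i₂ → 2 ≤ l1Dist (t i₁) (t i₂) := by
  obtain ⟨hinj, hconf⟩ := ht
  intro i₁ i₂ hne
  by_contra hlt
  push_neg at hlt
  interval_cases h : l1Dist (t i₁) (t i₂)
  · -- ℓ1 distance 0 : the points are equal, contradiction with injectivity
    have : t i₁ = t i₂ := by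
      funext a
      have h2 : (t i₁ a - t i₂ a).natAbs = 0 := by
        have := (Finset.sum_eq_zero_iff).mp h a (Finset.mem_univ a)
        exact this
      rw [Int.natAbs_eq_zero, sub_eq_zero] at h2
      exact h2
    exact hne (hinj this)
  · -- ℓ1 distance 1 : derive a contradiction from the configuration structure
    obtain ⟨c, hc1, hceq⟩ := l1_one h
    -- ℓ∞ distance between t i₁ and t i₂ is 1
    have hlinf12 : linfDist (t i₁) (t i₂) = 1 := by
      have hge := coord_le_linf (t i₁) (t i₂) c
      have hle : linfDist (t i₁) (t i₂) ≤ 1 := by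
        apply Finset.sup_le
        intro a _
        by_cases hac : a = c
        · subst hac; omega
        · rw [hceq a hac]; simp
      omega
    -- the unique non-neighbors
    obtain ⟨j₁, ⟨hj₁ne, hj₁⟩, huniq₁⟩ := hconf i₁
    obtain ⟨j₂, ⟨hj₂ne, hj₂⟩, huniq₂⟩ := hconf i₂
    -- i₂ ≠ j₁ (since i₁ and i₂ are ℓ∞-adjacent)
    have hi₂j₁ : i₂ ≠ j₁ := by
      rintro rfl
      exact hj₁ hlinf12
    have hi₁j₂ : i₁ ≠ j₂ := by
      rintro rfl
      rw [linf_symm] at hj₂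
      exact hj₂ hlinf12
    -- j₁ ≠ j₂
    have hj₁j₂ : j₁ ≠ j₂ := by
      intro hjj
      obtain ⟨m, _, huniqm⟩ := hconf j₁
      have h1 : i₁ = m := huniqm i₁ ⟨fun hh => hj₁ne hh.symm, by rw [linf_symm]; exact hj₁⟩
      have h2 : i₂ = m := huniqm i₂ ⟨hi₂j₁, by rw [hjj, linf_symm]; exact hj₂⟩
      exact hne (h1.trans h2.symm)
    -- j₁ is adjacent to i₂
    have hadj1 : linfDist (t i₂) (t j₁) = 1 := by
      by_contra hcon
      exact hj₁j₂ (huniq₂ j₁ ⟨hi₂j₁.symm ∘ Eq.symm ∘ Eq.symm, hcon⟩)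
    -- j₂ is adjacent to i₁
    have hadj2 : linfDist (t i₁) (t j₂) = 1 := by
      by_contra hcon
      exact (hj₁j₂ ((huniq₁ j₂ ⟨fun hh => hi₁j₂ hh.symm, hcon⟩)).symm).elim
    -- j₁ is adjacent to j₂
    have hadj3 : linfDist (t j₁) (t j₂) = 1 := by
      by_contra hcon
      obtain ⟨m, _, huniqm⟩ := hconf j₁
      have h1 : i₁ = m := huniqm i₁ ⟨fun hh => hj₁ne hh.symm, by rw [linf_symm]; exact hj₁⟩
      have h2 : j₂ = m := huniqm j₂ ⟨fun hh => hj₁j₂ hh.symm, hcon⟩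
      exact hi₁j₂ (h1.trans h2.symm)
    -- now the coordinate computations
    have hne₁ : t i₁ ≠ t j₁ := fun hh => hj₁ne (hinj hh).symm
    have hne₂ : t i₂ ≠ t j₂ := fun hh => hj₂ne (hinj hh).symm
    have hfar₁ : 2 ≤ (t j₁ c - t i₁ c).natAbs :=
      key_far hceq hadj1 hj₁ hne₁
    have hceq' : ∀ a, a ≠ c → t i₂ a = t i₁ a := fun a ha => (hceq a ha).symm
    have hfar₂ : 2 ≤ (t j₂ c - t i₂ c).natAbs :=
      key_far hceq' hadj2 hj₂ hne₂
    have hb1 := coord_le_linf (t i₂) (t j₁) c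
    have hb2 := coord_le_linf (t i₁) (t j₂) c
    have hb3 := coord_le_linf (t j₁) (t j₂) c
    rw [hadj1] at hb1
    rw [hadj2] at hb2
    rw [hadj3] at hb3
    omega
end

section
/- Let d ≥ 2 and let t₁, …, t_{2d} ∈ ℤ^d be an O_{d−1}-configuration. Then the configuration is ℓ1-isometric to O_{d−1}; that is, ‖t_i − t_j‖₁ = 2 for all indices i ≠ j. -/
/-- For `d ≥ 2`, every `O_{d-1}`-configuration of `2d` points in `ℤ^d` is
`ℓ1`-isometric to `O_{d-1}`: all pairwise `ℓ1` distances equal `2`. -/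
theorem okConfig_top_dim_l1_isometric (d : ℕ) (hd : 2 ≤ d)
    (t : Fin (2 * (d - 1) + 2) → Fin d → ℤ) (ht : IsOkConfig d (d - 1) t) :
    ∀ i j : Fin (2 * (d - 1) + 2), i ≠ j → l1Dist (t i) (t j) = 2 := by
  obtain ⟨hinj, huniq⟩ := ht
  have huniq' : ∀ i, ∃ i', (i' ≠ i ∧ linfDist (t i) (t i') ≠ 1) ∧
      ∀ y, (y ≠ i ∧ linfDist (t i) (t y) ≠ 1) → y = i' := huniq
  choose op hop hu using huniq'
  have hne : ∀ i, op i ≠ i := fun i => (hop i).1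
  have hlinf : ∀ i, linfDist (t i) (t (op i)) ≠ 1 := fun i => (hop i).2
  have hsymm : ∀ x y : Fin d → ℤ, linfDist x y = linfDist y x := by
    intro x y
    unfold linfDist
    exact Finset.sup_congr rfl fun c _ => by omega
  have hopop : ∀ i, op (op i) = i := by
    intro i
    exact (hu (op i) i ⟨Ne.symm (hne i), by rw [hsymm]; exact hlinf i⟩).symm
  have hadj : ∀ i j, j ≠ i → j ≠ op i → linfDist (t i) (t j) = 1 := by
    intro i j h1 h2
    by_contra h
    exact h2 (hu i j ⟨h1, h⟩)
  have hb : ∀ i j c, j ≠ i → j ≠ op i → (t i c - t j c).natAbs ≤ 1 := by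
    intro i j c h1 h2
    have := Finset.le_sup (f := fun c => (t i c - t j c).natAbs) (Finset.mem_univ c)
    rw [show Finset.univ.sup (fun c => (t i c - t j c).natAbs) = linfDist (t i) (t j) from rfl,
      hadj i j h1 h2] at this
    exact this
  have hex : ∀ i : Fin (2 * (d - 1) + 2), ∃ j, j ≠ i ∧ j ≠ op i := by
    intro i
    by_contra h
    push_neg at h
    have hsub : (Finset.univ : Finset (Fin (2 * (d - 1) + 2))) ⊆ {i, op i} := by
      intro j _
      rcases eq_or_ne j i with hj | hj
      · simp [hj]
      · simp [h j hj]
    have := Finset.card_le_card hsub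
    have h2 : ({i, op i} : Finset (Fin (2 * (d - 1) + 2))).card ≤ 2 := by
      apply le_trans (Finset.card_insert_le _ _)
      simp
    simp [Finset.card_univ] at this
    omega
  have hop2c : ∀ i, ∃ c, 2 ≤ (t i c - t (op i) c).natAbs := by
    intro i
    have hne' : t i ≠ t (op i) := fun h => (hne i) (hinj h.symm)
    obtain ⟨c, hc⟩ := Function.ne_iff.mp hne'
    by_contra h
    push_neg at h
    apply hlinf i
    have hle : Finset.univ.sup (fun c => (t i c - t (op i) c).natAbs) ≤ 1 :=
      Finset.sup_le fun c _ => by have := h c; omega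
    have hpos : 1 ≤ (t i c - t (op i) c).natAbs := by
      have := Int.natAbs_pos.mpr (sub_ne_zero.mpr hc)
      omega
    have hge : 1 ≤ Finset.univ.sup (fun c => (t i c - t (op i) c).natAbs) :=
      le_trans hpos (Finset.le_sup (f := fun c => (t i c - t (op i) c).natAbs) (Finset.mem_univ c))
    unfold linfDist
    omega
  choose sep hsep using hop2c
  have hmid : ∀ k j c, j ≠ k → j ≠ op k → 2 ≤ (t k c - t (op k) c).natAbs →
      2 * t j c = t k c + t (op k) c ∧ (t k c - t (op k) c).natAbs = 2 := by
    intro k j c h1 h2 h3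
    have ha := hb k j c h1 h2
    have hb' := hb (op k) j c h2 (by rw [hopop]; exact h1)
    omega
  have hB : ∀ i k c, 2 ≤ (t i c - t (op i) c).natAbs → 2 ≤ (t k c - t (op k) c).natAbs →
      k = i ∨ k = op i := by
    intro i k c hi hk
    by_contra h
    push_neg at h
    obtain ⟨h1, h2⟩ := h
    have h3 : op k ≠ i := fun h' => h2 (by rw [← h', hopop])
    have h4 : op k ≠ op i := fun h' => h1 (by rw [← hopop k, h', hopop])
    have m1 := (hmid i k c h1 h2 hi).1
    have m2 := (hmid i (op k) c h3 h4 hi).1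
    omega
  have hsepAbs : ∀ i, (t i (sep i) - t (op i) (sep i)).natAbs = 2 := by
    intro i
    obtain ⟨j, h1, h2⟩ := hex i
    exact (hmid i j (sep i) h1 h2 (hsep i)).2
  have hfiber : ∀ i : Fin (2 * (d - 1) + 2),
      Finset.univ.filter (fun x => sep x = sep i) ⊆ {i, op i} := by
    intro i x hx
    simp only [Finset.mem_filter, Finset.mem_univ, true_and] at hx
    have := hB i x (sep i) (hsep i) (hx ▸ hsep x)
    simpa [Finset.mem_insert, Finset.mem_singleton] using this
  have hfibcard : ∀ a ∈ Finset.univ.image sep,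
      (Finset.univ.filter fun x => sep x = a).card ≤ 2 := by
    intro a ha
    obtain ⟨i, -, hi⟩ := Finset.mem_image.mp ha
    calc (Finset.univ.filter fun x => sep x = a).card
        ≤ ({i, op i} : Finset _).card := Finset.card_le_card (hi ▸ hfiber i)
      _ ≤ 2 := le_trans (Finset.card_insert_le _ _) (by simp)
  have himage : (Finset.univ.image sep).card = d := by
    have h1 : (Finset.univ.image sep).card ≤ d :=
      le_trans (Finset.card_le_univ _) (by simp)
    have h2 := Finset.card_le_mul_card_image (f := sep) Finset.univ 2 hfibcard
    simp [Finset.card_univ] at h2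
    omega
  have hsurj : ∀ c, ∃ i, sep i = c := by
    have himg : Finset.univ.image sep = Finset.univ :=
      Finset.eq_univ_of_card _ (by rw [himage, Fintype.card_fin])
    intro c
    have : c ∈ Finset.univ.image sep := himg ▸ Finset.mem_univ c
    obtain ⟨i, -, hi⟩ := Finset.mem_image.mp this
    exact ⟨i, hi⟩
  have hsame : ∀ i, sep (op i) = sep i := by
    intro i
    by_contra hne'
    have hsum := Finset.card_eq_sum_card_fiberwise
      (f := sep) (s := Finset.univ) (t := Finset.univ.image sep)
      (fun x _ => Finset.mem_image_of_mem sep (Finset.mem_univ x))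
    have hsmall : (Finset.univ.filter fun x => sep x = sep i).card < 2 := by
      have hsub : (Finset.univ.filter fun x => sep x = sep i) ⊆ {i} := by
        intro x hx
        have hx' := hfiber i hx
        simp only [Finset.mem_insert, Finset.mem_singleton] at hx' ⊢
        rcases hx' with h | h
        · exact h
        · exfalso
          simp only [Finset.mem_filter, Finset.mem_univ, true_and] at hx
          rw [h] at hx
          exact hne' hx
      have := Finset.card_le_card hsub
      simp at this
      omega
    have hlt : ∑ a ∈ Finset.univ.image sep, (Finset.univ.filter fun x => sep x = a).card <
        ∑ _a ∈ Finset.univ.image sep, 2 :=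
      Finset.sum_lt_sum (fun a ha => hfibcard a ha)
        ⟨sep i, Finset.mem_image_of_mem sep (Finset.mem_univ i), hsmall⟩
    rw [Finset.sum_const, himage, smul_eq_mul, ← hsum, Finset.card_univ, Fintype.card_fin] at hlt
    omega
  have hagree : ∀ c j j', sep j ≠ c → sep j' ≠ c → t j c = t j' c := by
    intro c j j' h1 h2
    obtain ⟨k, hk⟩ := hsurj c
    have hk2 : 2 ≤ (t k c - t (op k) c).natAbs := hk ▸ hsep k
    have key : ∀ x, sep x ≠ c → 2 * t x c = t k c + t (op k) c := by
      intro x hx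
      have hx1 : x ≠ k := fun h => hx (h ▸ hk)
      have hx2 : x ≠ op k := fun h => hx (by rw [h, hsame, hk])
      exact (hmid k x c hx1 hx2 hk2).1
    have := key j h1
    have := key j' h2
    omega
  have hone : ∀ i j, j ≠ i → j ≠ op i → (t i (sep i) - t j (sep i)).natAbs = 1 := by
    intro i j h1 h2
    have ha := hb i j (sep i) h1 h2
    have hb' := hb (op i) j (sep i) h2 (by rw [hopop]; exact h1)
    have := hsepAbs i
    omega
  intro i j hij
  rcases eq_or_ne j (op i) with hj | hj
  · subst hj
    unfold l1Dist
    rw [Finset.sum_eq_single_of_mem (sep i) (Finset.mem_univ _) ?_]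
    · exact hsepAbs i
    · intro c _ hc
      have h1 : sep i ≠ c := Ne.symm hc
      have h2 : sep (op i) ≠ c := by rw [hsame]; exact Ne.symm hc
      rw [hagree c i (op i) h1 h2, sub_self]
      rfl
  · have hij' : j ≠ i := Ne.symm hij
    have hiopj : i ≠ op j := by
      intro h
      apply hj
      rw [h, hopop]
    have hssep : sep i ≠ sep j := by
      intro h
      rcases hB i j (sep i) (hsep i) (by rw [h]; exact hsep j) with h' | h'
      · exact hij' h'
      · exact hj h'
    unfold l1Dist
    have h0 : ∀ c ∈ Finset.univ, c ∉ ({sep i, sep j} : Finset (Fin d)) →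
        (t i c - t j c).natAbs = 0 := by
      intro c _ hc
      simp only [Finset.mem_insert, Finset.mem_singleton, not_or] at hc
      rw [hagree c i j (fun h => hc.1 h.symm) (fun h => hc.2 h.symm), sub_self]
      rfl
    rw [← Finset.sum_subset (Finset.subset_univ {sep i, sep j}) h0,
      Finset.sum_pair hssep]
    have e1 := hone i j hij' hj
    have e2 := hone j i hij hiopj
    omega
end

section
/- Let d ≥ 1, k ≥ 1, and let t₁, …, t_{2k+2} ∈ ℤ^d be an O_k-configuration. The configuration is ℓ1-isometric to O_k if and only if there exist a unique point t ∈ ℤ^d and a unique subset Ω ⊆ {1, …, d} of size k+1 such that {t₁, …, t_{2k+2}} = {t + e_ω : ω ∈ Ω} ∪ {t − e_ω : ω ∈ Ω}, where e₁, …, e_d are the standard basis vectors of ℤ^d. -/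
lemma linfDist_comm' {d : ℕ} (x y : Fin d → ℤ) :
    (Finset.univ.sup fun i => (x i - y i).natAbs) = Finset.univ.sup fun i => (y i - x i).natAbs := by
  congr 1; funext i; omega

lemma opp_structure {d : ℕ} (u : Fin d → ℤ) (h2 : ∑ j, (u j).natAbs = 2)
    (hs : (Finset.univ.sup fun j => (u j).natAbs) ≠ 1) :
    ∃ w, (u w = 2 ∨ u w = -2) ∧ ∀ j, j ≠ w → u j = 0 := by
  have hex : ∃ w, (u w).natAbs = 2 := by
    by_contra h
    push_neg at h
    have hsup : (Finset.univ.sup fun j => (u j).natAbs) ≤ 1 := by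
      apply Finset.sup_le; intro j _
      have hle := Finset.single_le_sum (f := fun j => (u j).natAbs) (s := Finset.univ)
        (fun _ _ => Nat.zero_le _) (Finset.mem_univ j)
      rw [h2] at hle
      have := h j; omega
    have hsup0 : (Finset.univ.sup fun j => (u j).natAbs) = 0 := by omega
    have hz : ∀ j, (u j).natAbs = 0 := by
      intro j
      have : (u j).natAbs ≤ (Finset.univ.sup fun j => (u j).natAbs) :=
        Finset.le_sup (f := fun j => (u j).natAbs) (Finset.mem_univ j)
      omega
    have : ∑ j, (u j).natAbs = 0 := Finset.sum_eq_zero fun j _ => hz j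
    omega
  obtain ⟨w, hw⟩ := hex
  have e1 := Finset.add_sum_erase Finset.univ (fun j => (u j).natAbs) (Finset.mem_univ w)
  rw [h2] at e1
  have e0 : ∑ j ∈ Finset.univ.erase w, (u j).natAbs = 0 := by omega
  refine ⟨w, by omega, fun j hj => ?_⟩
  have := Finset.sum_eq_zero_iff.mp e0 j (by simp [hj])
  omega

lemma cross_pairs {d : ℕ} (a b : Fin d → ℤ) (ω ν : Fin d) (ε δ : ℤ)
    (hε : ε = 1 ∨ ε = -1) (hδ : δ = 1 ∨ δ = -1)
    (hab1 : ∀ j, (a j - b j).natAbs ≤ 1)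
    (hab2 : ∑ j, (a j - b j).natAbs = 2)
    (ha'b : ∀ j, ((a j - (if j = ω then 2*ε else 0)) - b j).natAbs ≤ 1)
    (hab' : ∀ j, (a j - (b j - (if j = ν then 2*δ else 0))).natAbs ≤ 1)
    (ha'b' : ∀ j, ((a j - (if j = ω then 2*ε else 0)) - (b j - (if j = ν then 2*δ else 0))).natAbs ≤ 1) :
    ω ≠ ν ∧ ∀ j, (a j + (a j - (if j = ω then 2*ε else 0))) = b j + (b j - (if j = ν then 2*δ else 0)) := by
  have huω : a ω - b ω = ε := by
    have h1 := hab1 ω; have h2 := ha'b ω; rw [if_pos rfl] at h2; omega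
  have huν : a ν - b ν = -δ := by
    have h1 := hab1 ν; have h3 := hab' ν; rw [if_pos rfl] at h3; omega
  have hne : ω ≠ ν := by
    intro h
    subst h
    have h4 := ha'b' ω
    rw [if_pos rfl, if_pos rfl] at h4
    omega
  have hzero : ∀ j, j ≠ ω → j ≠ ν → a j = b j := by
    have e1 := Finset.add_sum_erase Finset.univ (fun j => (a j - b j).natAbs) (Finset.mem_univ ω)
    rw [hab2] at e1
    have hνm : ν ∈ Finset.univ.erase ω := by simp [Ne.symm hne]
    have e2 := Finset.add_sum_erase (Finset.univ.erase ω) (fun j => (a j - b j).natAbs) hνm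
    have e0 : ∑ j ∈ (Finset.univ.erase ω).erase ν, (a j - b j).natAbs = 0 := by
      rw [huω] at e1; rw [huν] at e2; omega
    intro j hjω hjν
    have := Finset.sum_eq_zero_iff.mp e0 j (by simp [hjω, hjν])
    omega
  refine ⟨hne, fun j => ?_⟩
  by_cases h1 : j = ω
  · subst h1; rw [if_pos rfl, if_neg hne]; omega
  · by_cases h2 : j = ν
    · subst h2; rw [if_neg h1, if_pos rfl]; omega
    · rw [if_neg h1, if_neg h2]; have := hzero j h1 h2; omega

lemma l1_pm {d : ℕ} (t : Fin d → ℤ) (s s' : ℤ) (hs : s = 1 ∨ s = -1) (hs' : s' = 1 ∨ s' = -1)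
    (ν μ : Fin d) (h : ¬(ν = μ ∧ s = s')) :
    ∑ j, ((t j + s * (if j = ν then 1 else 0)) - (t j + s' * (if j = μ then 1 else 0))).natAbs = 2 := by
  by_cases hνμ : ν = μ
  · subst hνμ
    have hss : s ≠ s' := fun hh => h ⟨rfl, hh⟩
    have hp : ∀ j, ((t j + s * (if j = ν then 1 else 0)) - (t j + s' * (if j = ν then 1 else 0))).natAbs
        = if j = ν then 2 else 0 := by
      intro j; by_cases hj : j = ν <;> simp [hj] <;> omega
    rw [Finset.sum_congr rfl fun j _ => hp j]
    simp
  · have hp : ∀ j, ((t j + s * (if j = ν then 1 else 0)) - (t j + s' * (if j = μ then 1 else 0))).natAbs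
        = (if j = ν then 1 else 0) + (if j = μ then 1 else 0) := by
      intro j
      by_cases h1 : j = ν
      · by_cases h2 : j = μ
        · exact absurd (h1.symm.trans h2) hνμ
        · simp [h1, h2, hνμ]; omega
      · by_cases h2 : j = μ <;> simp [h1, h2, Ne.symm hνμ] <;> omega
    rw [Finset.sum_congr rfl fun j _ => hp j, Finset.sum_add_distrib]
    simp

lemma memPM {d : ℕ} (t : Fin d → ℤ) (Ω : Finset (Fin d)) (x : Fin d → ℤ) :
    x ∈ ((fun w : Fin d => t + Pi.single w 1) '' ↑Ω) ∪ ((fun w : Fin d => t - Pi.single w 1) '' ↑Ω) ↔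
      ∃ w ∈ Ω, ∃ s : ℤ, (s = 1 ∨ s = -1) ∧ ∀ j, x j = t j + s * (if j = w then 1 else 0) := by
  simp only [Set.mem_union, Set.mem_image, Finset.mem_coe]
  constructor
  · rintro (⟨w, hw, rfl⟩ | ⟨w, hw, rfl⟩)
    · exact ⟨w, hw, 1, Or.inl rfl, fun j => by simp [Pi.single_apply]⟩
    · refine ⟨w, hw, -1, Or.inr rfl, fun j => ?_⟩
      simp only [Pi.sub_apply, Pi.single_apply]
      split_ifs <;> ring
  · rintro ⟨w, hw, s, (rfl | rfl), hx⟩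
    · left
      refine ⟨w, hw, funext fun j => ?_⟩
      have hh := hx j
      simp only [Pi.add_apply, Pi.single_apply]
      split_ifs at hh ⊢ <;> omega
    · right
      refine ⟨w, hw, funext fun j => ?_⟩
      have hh := hx j
      simp only [Pi.sub_apply, Pi.single_apply]
      split_ifs at hh ⊢ <;> omega

lemma pair_unique {d : ℕ} (S : Set (Fin d → ℤ)) (t t' : Fin d → ℤ) (Ω Ω' : Finset (Fin d))
    (hne : Ω.Nonempty)
    (h : S = ((fun w : Fin d => t + Pi.single w 1) '' ↑Ω) ∪ ((fun w : Fin d => t - Pi.single w 1) '' ↑Ω))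
    (h' : S = ((fun w : Fin d => t' + Pi.single w 1) '' ↑Ω') ∪ ((fun w : Fin d => t' - Pi.single w 1) '' ↑Ω')) :
    t = t' ∧ Ω = Ω' := by
  obtain ⟨w0, hw0⟩ := hne
  have m1 : (t + Pi.single w0 1) ∈ S := by
    rw [h, memPM]
    exact ⟨w0, hw0, 1, Or.inl rfl, fun j => by simp [Pi.single_apply]⟩
  have m2 : (t - Pi.single w0 1) ∈ S := by
    rw [h, memPM]
    refine ⟨w0, hw0, -1, Or.inr rfl, fun j => ?_⟩
    simp only [Pi.sub_apply, Pi.single_apply]; split_ifs <;> ring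
  rw [h', memPM] at m1 m2
  obtain ⟨a, _, s1, hs1, e1⟩ := m1
  obtain ⟨b, _, s2, hs2, e2⟩ := m2
  have e1' : ∀ j, t j + (if j = w0 then 1 else 0) = t' j + s1 * (if j = a then 1 else 0) := by
    intro j; have := e1 j; simpa [Pi.single_apply] using this
  have e2' : ∀ j, t j - (if j = w0 then 1 else 0) = t' j + s2 * (if j = b then 1 else 0) := by
    intro j; have := e2 j
    simp only [Pi.sub_apply, Pi.single_apply] at this
    linarith [this]
  have ha : w0 = a ∧ s1 = 1 := by
    have u1 := e1' w0; have u2 := e2' w0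
    rw [if_pos rfl] at u1 u2
    by_cases h1 : w0 = a
    · refine ⟨h1, ?_⟩
      rw [if_pos h1] at u1
      by_cases h2 : w0 = b
      · rw [if_pos h2] at u2; omega
      · rw [if_neg h2] at u2; omega
    · exfalso
      rw [if_neg h1] at u1
      by_cases h2 : w0 = b
      · rw [if_pos h2] at u2; omega
      · rw [if_neg h2] at u2; omega
  have ht' : t = t' := by
    obtain ⟨haw, hs1'⟩ := ha
    funext j
    have := e1' j
    rw [hs1', ← haw] at this
    by_cases hj : j = w0
    · rw [if_pos hj] at this; omega
    · rw [if_neg hj] at this; omega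
  subst ht'
  have key : ∀ (A B : Finset (Fin d)),
      S = ((fun w : Fin d => t + Pi.single w 1) '' ↑A) ∪ ((fun w : Fin d => t - Pi.single w 1) '' ↑A) →
      S = ((fun w : Fin d => t + Pi.single w 1) '' ↑B) ∪ ((fun w : Fin d => t - Pi.single w 1) '' ↑B) →
      A ⊆ B := by
    intro A B hA hB w hw
    have hm : (t + Pi.single w 1) ∈ S := by
      rw [hA, memPM]
      exact ⟨w, hw, 1, Or.inl rfl, fun j => by simp [Pi.single_apply]⟩
    rw [hB, memPM] at hm
    obtain ⟨c, hc, s, hss, e⟩ := hm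
    have he := e w
    simp only [Pi.add_apply, Pi.single_apply, if_pos rfl] at he
    by_cases hwc : w = c
    · exact hwc ▸ hc
    · exfalso; rw [if_neg hwc] at he; simp at he
  exact ⟨rfl, Finset.Subset.antisymm (key Ω Ω' h h') (key Ω' Ω h' h)⟩

/-- An `O_k`-configuration is `ℓ1`-isometric to `O_k` (all pairwise `ℓ1`
distances equal `2`) if and only if there is a unique pair `(t, Ω)` of a point `t ∈ ℤ^d` and a
`(k+1)`-element subset `Ω ⊆ {1,…,d}` with the configuration being exactly
`{t + e_ω : ω ∈ Ω} ∪ {t − e_ω : ω ∈ Ω}`. -/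
theorem okConfig_l1_isometric_iff_center (d k : ℕ) (hd : 1 ≤ d) (hk : 1 ≤ k)
    (ts : Fin (2 * k + 2) → Fin d → ℤ) (ht : IsOkConfig d k ts) :
    (∀ i j : Fin (2 * k + 2), i ≠ j → l1Dist (ts i) (ts j) = 2) ↔
      ∃! p : (Fin d → ℤ) × Finset (Fin d), p.2.card = k + 1 ∧
        Set.range ts =
          ((fun w : Fin d => p.1 + Pi.single w 1) '' ↑p.2) ∪
            ((fun w : Fin d => p.1 - Pi.single w 1) '' ↑p.2) := by
  constructor
  · intro hl1
    obtain ⟨hinj, hopp⟩ := ht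
    choose sig hsig using hopp
    have hne : ∀ i, sig i ≠ i := fun i => (hsig i).1.1
    have hlinf : ∀ i, linfDist (ts i) (ts (sig i)) ≠ 1 := fun i => (hsig i).1.2
    have huniq : ∀ i j, j ≠ i ∧ linfDist (ts i) (ts j) ≠ 1 → j = sig i := fun i => (hsig i).2
    have hinv : ∀ i, sig (sig i) = i := by
      intro i
      refine (huniq (sig i) i ⟨(hne i).symm, ?_⟩).symm
      rw [show linfDist (ts (sig i)) (ts i) = linfDist (ts i) (ts (sig i)) from
        linfDist_comm' _ _]
      exact hlinf i
    have hnbr : ∀ i j, j ≠ i → j ≠ sig i → ∀ m, (ts i m - ts j m).natAbs ≤ 1 := by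
      intro i j h1 h2 m
      have hl : linfDist (ts i) (ts j) = 1 := by
        by_contra hcon; exact h2 (huniq i j ⟨h1, hcon⟩)
      calc (ts i m - ts j m).natAbs
          ≤ linfDist (ts i) (ts j) :=
            Finset.le_sup (f := fun m => (ts i m - ts j m).natAbs) (Finset.mem_univ m)
        _ = 1 := hl
    have hl1' : ∀ i j, j ≠ i → ∑ m, (ts i m - ts j m).natAbs = 2 :=
      fun i j h => hl1 i j (Ne.symm h)
    have key : ∀ i, ∃ w : Fin d, ∃ sg : ℤ, (sg = 1 ∨ sg = -1) ∧
        ∀ j, ts i j - ts (sig i) j = if j = w then 2 * sg else 0 := by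
      intro i
      obtain ⟨w, hw2, hw0⟩ := opp_structure (fun j => ts i j - ts (sig i) j)
        (hl1' i (sig i) (hne i)) (hlinf i)
      rcases hw2 with h | h
      · refine ⟨w, 1, Or.inl rfl, fun j => ?_⟩
        by_cases hj : j = w
        · rw [if_pos hj, hj]; omega
        · rw [if_neg hj]; exact hw0 j hj
      · refine ⟨w, -1, Or.inr rfl, fun j => ?_⟩
        by_cases hj : j = w
        · rw [if_pos hj, hj]; omega
        · rw [if_neg hj]; exact hw0 j hj
    choose ww ss hss hval using key
    have hsigw : ∀ i, ww (sig i) = ww i := by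
      intro i
      by_contra hcon
      have h1 := hval (sig i) (ww i)
      rw [hinv i] at h1
      have h2 := hval i (ww i)
      rw [if_pos rfl] at h2
      rw [if_neg (fun hh => hcon hh.symm)] at h1
      have := hss i; omega
    have hcross : ∀ i i', i' ≠ i → i' ≠ sig i →
        ww i' ≠ ww i ∧ ∀ j, ts i' j + ts (sig i') j = ts i j + ts (sig i) j := by
      intro i i' h1 h2
      have hsia : ∀ j, ts (sig i') j = ts i' j - (if j = ww i' then 2 * ss i' else 0) :=
        fun j => by have := hval i' j; omega
      have hsib : ∀ j, ts (sig i) j = ts i j - (if j = ww i then 2 * ss i else 0) :=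
        fun j => by have := hval i j; omega
      have n1 : sig i' ≠ i := by
        intro hh; apply h2; rw [← hh, hinv]
      have n2 : sig i' ≠ sig i := fun hh => h1 (by rw [← hinv i', hh, hinv])
      have n3 : i ≠ sig i' := Ne.symm n1
      obtain ⟨hwne, hsum⟩ := cross_pairs (ts i') (ts i) (ww i') (ww i) (ss i') (ss i)
        (hss i') (hss i)
        (fun m => hnbr i' i (Ne.symm h1) n3 m)
        (hl1' i' i (Ne.symm h1))
        (fun j => by rw [← hsia j]; exact hnbr (sig i') i n3 (by rw [hinv]; exact Ne.symm h1) j)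
        (fun j => by rw [← hsib j]; exact hnbr i' (sig i) (Ne.symm h2) (Ne.symm n2) j)
        (fun j => by
          rw [← hsia j, ← hsib j]
          exact hnbr (sig i') (sig i) (Ne.symm n2) (by rw [hinv]; exact Ne.symm h2) j)
      refine ⟨hwne, fun j => ?_⟩
      have := hsum j
      rw [← hsia j, ← hsib j] at this
      exact this
    haveI : NeZero (2 * k + 2) := ⟨by omega⟩
    have hmid : ∀ i j, ts i j + ts (sig i) j = ts 0 j + ts (sig 0) j := by
      intro i j
      by_cases h0 : i = 0
      · rw [h0]
      · by_cases hs0 : i = sig 0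
        · rw [hs0, hinv]; ring
        · exact (hcross 0 i h0 hs0).2 j
    have hwinj : ∀ i i', ww i' = ww i → i' = i ∨ i' = sig i := by
      intro i i' h
      by_contra hc
      push_neg at hc
      exact (hcross i i' hc.1 hc.2).1 h
    set t : Fin d → ℤ := fun j => ts 0 j - (if j = ww 0 then ss 0 else 0) with hT
    have hpt : ∀ i j, ts i j = t j + (if j = ww i then ss i else 0) := by
      intro i j
      have h1 := hmid i j
      have h2 := hval i j
      have h3 := hval 0 j
      simp only [hT]
      split_ifs at h2 h3 ⊢ <;> omega
    have hpt' : ∀ i j, ts (sig i) j = t j - (if j = ww i then ss i else 0) := by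
      intro i j
      have h1 := hpt i j
      have h2 := hval i j
      split_ifs at h1 h2 ⊢ <;> omega
    set Ω := Finset.image ww Finset.univ with hΩ
    have hfiber : ∀ i, Finset.univ.filter (fun x => ww x = ww i) = {i, sig i} := by
      intro i; ext x
      simp only [Finset.mem_filter, Finset.mem_univ, true_and, Finset.mem_insert,
        Finset.mem_singleton]
      constructor
      · exact hwinj i x
      · rintro (rfl | rfl)
        · rfl
        · exact hsigw i
    have hcard : Ω.card = k + 1 := by
      have h1 := Finset.card_eq_sum_card_fiberwise (s := Finset.univ) (t := Ω) (f := ww)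
        (fun x _ => Finset.mem_image_of_mem ww (Finset.mem_univ x))
      have h2 : ∀ w ∈ Ω, (Finset.univ.filter fun x => ww x = w).card = 2 := by
        intro w hw
        obtain ⟨i, _, rfl⟩ := Finset.mem_image.mp hw
        rw [hfiber i]
        exact Finset.card_pair (Ne.symm (hne i))
      rw [Finset.sum_congr rfl h2] at h1
      simp only [Finset.card_univ, Fintype.card_fin, Finset.sum_const, smul_eq_mul] at h1
      omega
    have hrange : Set.range ts =
        ((fun w : Fin d => t + Pi.single w 1) '' ↑Ω) ∪
          ((fun w : Fin d => t - Pi.single w 1) '' ↑Ω) := by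
      ext x
      rw [memPM]
      constructor
      · rintro ⟨i, rfl⟩
        refine ⟨ww i, Finset.mem_image_of_mem ww (Finset.mem_univ i), ss i, hss i, fun j => ?_⟩
        have := hpt i j
        split_ifs at this ⊢ <;> omega
      · rintro ⟨w, hw, sg, hsg, hx⟩
        obtain ⟨i, _, rfl⟩ := Finset.mem_image.mp hw
        rcases hsg with rfl | rfl
        · rcases hss i with h | h
          · refine ⟨i, funext fun j => ?_⟩
            have h1 := hpt i j; have h2 := hx j
            split_ifs at h1 h2 ⊢ <;> omega
          · refine ⟨sig i, funext fun j => ?_⟩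
            have h1 := hpt' i j; have h2 := hx j
            split_ifs at h1 h2 ⊢ <;> omega
        · rcases hss i with h | h
          · refine ⟨sig i, funext fun j => ?_⟩
            have h1 := hpt' i j; have h2 := hx j
            split_ifs at h1 h2 ⊢ <;> omega
          · refine ⟨i, funext fun j => ?_⟩
            have h1 := hpt i j; have h2 := hx j
            split_ifs at h1 h2 ⊢ <;> omega
    refine ⟨⟨t, Ω⟩, ⟨hcard, hrange⟩, ?_⟩
    rintro ⟨t', Ω'⟩ ⟨hc', hr'⟩
    have hΩne : Ω.Nonempty := Finset.card_pos.mp (by omega)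
    obtain ⟨hteq, hΩeq⟩ := pair_unique (Set.range ts) t t' Ω Ω' hΩne hrange hr'
    simp only [Prod.mk.injEq]
    exact ⟨hteq.symm, hΩeq.symm⟩
  · rintro ⟨⟨t, Ω⟩, ⟨hcard, hrange⟩, -⟩ i j hij
    have hi : ts i ∈ Set.range ts := ⟨i, rfl⟩
    have hj : ts j ∈ Set.range ts := ⟨j, rfl⟩
    rw [hrange, memPM] at hi hj
    obtain ⟨w1, _, s1, hs1, e1⟩ := hi
    obtain ⟨w2, _, s2, hs2, e2⟩ := hj
    have hnee : ts i ≠ ts j := fun h => hij (ht.1 h)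
    have hcond : ¬(w1 = w2 ∧ s1 = s2) := by
      rintro ⟨rfl, rfl⟩
      exact hnee (funext fun m => by rw [e1 m, e2 m])
    calc l1Dist (ts i) (ts j)
        = ∑ m, ((t m + s1 * (if m = w1 then 1 else 0))
            - (t m + s2 * (if m = w2 then 1 else 0))).natAbs :=
          Finset.sum_congr rfl fun m _ => by rw [← e1 m, ← e2 m]
      _ = 2 := l1_pm t s1 s2 hs1 hs2 w1 w2 hcond
end

section
/- Let m₁, m₂ ≥ 1 and let ρ, μ ∈ [0,1) satisfy 1+(m₁−1)ρ − m₁μ > 0 and 1+(m₂−1)ρ − m₂μ > 0. Then the matrix W_{m₁,m₂}(ρ,μ) is positive definite. -/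
open Matrix Finset

/-- The block matrix `W_{m₁,m₂}(ρ,μ)`: diagonal entries `1`, off-diagonal entries `ρ` within each
of the two diagonal blocks (of sizes `m₁` and `m₂`) and `μ` in the off-diagonal blocks. -/
def Wblk (m₁ m₂ : ℕ) (ρ μ : ℝ) : Matrix (Fin (m₁ + m₂)) (Fin (m₁ + m₂)) ℝ :=
  Matrix.of fun i j =>
    if i = j then 1 else if ((i : ℕ) < m₁ ↔ (j : ℕ) < m₁) then ρ else μ

lemma Wblk_symm (m₁ m₂ : ℕ) (ρ μ : ℝ) (a b : Fin (m₁ + m₂)) :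
    Wblk m₁ m₂ ρ μ a b = Wblk m₁ m₂ ρ μ b a := by
  unfold Wblk
  simp only [Matrix.of_apply]
  by_cases hab : a = b
  · simp [hab]
  · by_cases ha : (a : ℕ) < m₁ <;> by_cases hb : (b : ℕ) < m₁ <;>
      simp [hab, Ne.symm hab, ha, hb]

lemma Wblk_entry (m₁ m₂ : ℕ) (ρ μ : ℝ) (i j : Fin (m₁ + m₂)) (x : Fin (m₁ + m₂) → ℝ) :
    x i * (Wblk m₁ m₂ ρ μ i j * x j)
      = μ * (x i * x j)
        + (ρ - μ) * ((if (i : ℕ) < m₁ then x i else 0) * (if (j : ℕ) < m₁ then x j else 0)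
            + (if (i : ℕ) < m₁ then 0 else x i) * (if (j : ℕ) < m₁ then 0 else x j))
        + (1 - ρ) * (if i = j then x i * x j else 0) := by
  unfold Wblk
  simp only [Matrix.of_apply]
  by_cases hij : i = j
  · subst hij
    by_cases h : (i : ℕ) < m₁ <;> simp [h] <;> ring
  · by_cases hi : (i : ℕ) < m₁ <;> by_cases hj : (j : ℕ) < m₁ <;>
      simp [hij, hi, hj] <;> ring

lemma card_filter_lt (m₁ m₂ : ℕ) :
    (Finset.univ.filter (fun i : Fin (m₁ + m₂) => (i : ℕ) < m₁)).card = m₁ := by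
  have : (Finset.univ.filter (fun i : Fin (m₁ + m₂) => (i : ℕ) < m₁))
      = Finset.univ.image (Fin.castAdd m₂ : Fin m₁ → Fin (m₁ + m₂)) := by
    ext j
    simp only [Finset.mem_filter, Finset.mem_univ, true_and, Finset.mem_image]
    constructor
    · intro hj
      exact ⟨⟨(j : ℕ), hj⟩, by ext; simp⟩
    · rintro ⟨a, -, rfl⟩
      exact a.isLt
  rw [this, Finset.card_image_of_injective _ (Fin.castAdd_injective m₁ m₂), Finset.card_univ,
    Fintype.card_fin]

/-- For `ρ, μ ∈ [0,1)` with `1+(m₁-1)ρ - m₁μ > 0` and `1+(m₂-1)ρ - m₂μ > 0`,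
the matrix `W_{m₁,m₂}(ρ,μ)` is positive definite. -/
theorem Wblk_posDef (m₁ m₂ : ℕ) (hm₁ : 1 ≤ m₁) (hm₂ : 1 ≤ m₂) (ρ μ : ℝ)
    (hρ : ρ ∈ Set.Ico (0 : ℝ) 1) (hμ : μ ∈ Set.Ico (0 : ℝ) 1)
    (h₁ : 0 < 1 + ((m₁ : ℝ) - 1) * ρ - (m₁ : ℝ) * μ)
    (h₂ : 0 < 1 + ((m₂ : ℝ) - 1) * ρ - (m₂ : ℝ) * μ) :
    (Wblk m₁ m₂ ρ μ).PosDef := by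
  obtain ⟨hρ0, hρ1⟩ := hρ
  obtain ⟨hμ0, hμ1⟩ := hμ
  rw [Matrix.posDef_iff_dotProduct_mulVec]
  constructor
  · exact Matrix.ext fun i j => by
      rw [conjTranspose_apply, Wblk_symm, star_trivial]
  intro x hx
  set y : Fin (m₁ + m₂) → ℝ := fun i => if (i : ℕ) < m₁ then x i else 0 with hy
  set z : Fin (m₁ + m₂) → ℝ := fun i => if (i : ℕ) < m₁ then 0 else x i with hz
  set S : ℝ := ∑ i, x i with hS
  set S₁ : ℝ := ∑ i, y i with hS₁
  set S₂ : ℝ := ∑ i, z i with hS₂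
  set Q : ℝ := ∑ i, x i ^ 2 with hQ
  set Q₁ : ℝ := ∑ i, y i ^ 2 with hQ₁
  set Q₂ : ℝ := ∑ i, z i ^ 2 with hQ₂
  have key : star x ⬝ᵥ (Wblk m₁ m₂ ρ μ) *ᵥ x
      = μ * S ^ 2 + (ρ - μ) * (S₁ ^ 2 + S₂ ^ 2) + (1 - ρ) * Q := by
    have e0 : star x ⬝ᵥ (Wblk m₁ m₂ ρ μ) *ᵥ x
        = ∑ i, ∑ j, x i * (Wblk m₁ m₂ ρ μ i j * x j) := by
      simp [dotProduct, mulVec, Finset.mul_sum, star]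
    have expand : ∀ i j, x i * (Wblk m₁ m₂ ρ μ i j * x j)
        = μ * (x i * x j) + (ρ - μ) * (y i * y j + z i * z j)
          + (1 - ρ) * (if i = j then x i * x j else 0) := fun i j =>
      Wblk_entry m₁ m₂ ρ μ i j x
    have ediag : ∑ i, ∑ j, (if i = j then x i * x j else 0) = Q := by
      simp [Finset.sum_ite_eq, hQ, sq]
    have exx : ∑ i, ∑ j, x i * x j = S ^ 2 := by rw [sq, hS, Finset.sum_mul_sum]
    have eyy : ∑ i, ∑ j, y i * y j = S₁ ^ 2 := by rw [sq, hS₁, Finset.sum_mul_sum]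
    have ezz : ∑ i, ∑ j, z i * z j = S₂ ^ 2 := by rw [sq, hS₂, Finset.sum_mul_sum]
    have split : ∀ (f g h : Fin (m₁ + m₂) → Fin (m₁ + m₂) → ℝ),
        ∑ i, ∑ j, (f i j + g i j + h i j)
          = (∑ i, ∑ j, f i j) + (∑ i, ∑ j, g i j) + (∑ i, ∑ j, h i j) := by
      intros; simp [Finset.sum_add_distrib]
    have c1 : ∑ i, ∑ j, μ * (x i * x j) = μ * ∑ i, ∑ j, x i * x j := by
      simp_rw [← Finset.mul_sum]
    have c2 : ∑ i, ∑ j, (ρ - μ) * (y i * y j + z i * z j)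
        = (ρ - μ) * (S₁ ^ 2 + S₂ ^ 2) := by
      simp_rw [← Finset.mul_sum, Finset.sum_add_distrib]
      rw [eyy, ezz]
    have c3 : ∑ i, ∑ j, (1 - ρ) * (if i = j then x i * x j else 0)
        = (1 - ρ) * ∑ i, ∑ j, (if i = j then x i * x j else 0) := by
      simp_rw [← Finset.mul_sum]
    rw [e0]
    simp_rw [expand]
    rw [split, c1, c2, c3, exx, ediag]
  rw [key]
  have hcs₁ : S₁ ^ 2 ≤ (m₁ : ℝ) * Q₁ := by
    have h := sq_sum_le_card_mul_sum_sq (s := Finset.univ.filter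
      (fun i : Fin (m₁ + m₂) => (i : ℕ) < m₁)) (f := x)
    rw [card_filter_lt] at h
    have e1 : S₁ = ∑ i ∈ Finset.univ.filter (fun i : Fin (m₁ + m₂) => (i : ℕ) < m₁), x i := by
      rw [hS₁, Finset.sum_filter]
    have e2 : Q₁ = ∑ i ∈ Finset.univ.filter (fun i : Fin (m₁ + m₂) => (i : ℕ) < m₁), x i ^ 2 := by
      rw [hQ₁, Finset.sum_filter]
      refine Finset.sum_congr rfl fun i _ => ?_
      by_cases h : (i : ℕ) < m₁ <;> simp [hy, h]
    rw [e1, e2]; exact_mod_cast h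
  have hcs₂ : S₂ ^ 2 ≤ (m₂ : ℝ) * Q₂ := by
    have h := sq_sum_le_card_mul_sum_sq (s := Finset.univ.filter
      (fun i : Fin (m₁ + m₂) => ¬ (i : ℕ) < m₁)) (f := x)
    have hcard : (Finset.univ.filter (fun i : Fin (m₁ + m₂) => ¬ (i : ℕ) < m₁)).card = m₂ := by
      have := Finset.card_filter_add_card_filter_not
        (s := (Finset.univ : Finset (Fin (m₁ + m₂)))) (p := fun i : Fin (m₁ + m₂) => (i : ℕ) < m₁)
      rw [card_filter_lt, Finset.card_univ, Fintype.card_fin] at this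
      omega
    rw [hcard] at h
    have e1 : S₂ = ∑ i ∈ Finset.univ.filter (fun i : Fin (m₁ + m₂) => ¬ (i : ℕ) < m₁), x i := by
      rw [hS₂, Finset.sum_filter]
      refine Finset.sum_congr rfl fun i _ => ?_
      by_cases h : (i : ℕ) < m₁ <;> simp [hz, h]
    have e2 : Q₂ = ∑ i ∈ Finset.univ.filter (fun i : Fin (m₁ + m₂) => ¬ (i : ℕ) < m₁),
        x i ^ 2 := by
      rw [hQ₂, Finset.sum_filter]
      refine Finset.sum_congr rfl fun i _ => ?_
      by_cases h : (i : ℕ) < m₁ <;> simp [hz, h]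
    rw [e1, e2]; exact_mod_cast h
  have hQ₁0 : 0 ≤ Q₁ := Finset.sum_nonneg fun i _ => sq_nonneg _
  have hQ₂0 : 0 ≤ Q₂ := Finset.sum_nonneg fun i _ => sq_nonneg _
  have hQsum : Q = Q₁ + Q₂ := by
    rw [hQ, hQ₁, hQ₂, ← Finset.sum_add_distrib]
    refine Finset.sum_congr rfl fun i _ => ?_
    by_cases h : (i : ℕ) < m₁ <;> simp [hy, hz, h]
  have hSsum : S = S₁ + S₂ := by
    rw [hS, hS₁, hS₂, ← Finset.sum_add_distrib]
    refine Finset.sum_congr rfl fun i _ => ?_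
    by_cases h : (i : ℕ) < m₁ <;> simp [hy, hz, h]
  have hQpos : 0 < Q := by
    obtain ⟨i, hi⟩ := Function.ne_iff.1 hx
    exact Finset.sum_pos' (fun i _ => sq_nonneg _)
      ⟨i, Finset.mem_univ i, lt_of_le_of_ne (sq_nonneg _) (Ne.symm (pow_ne_zero 2 hi))⟩
  have hm₁' : (1 : ℝ) ≤ (m₁ : ℝ) := by exact_mod_cast hm₁
  have hm₂' : (1 : ℝ) ≤ (m₂ : ℝ) := by exact_mod_cast hm₂
  have hm₁0 : (0 : ℝ) < m₁ := by linarith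
  have hm₂0 : (0 : ℝ) < m₂ := by linarith
  rw [hSsum, hQsum]
  by_cases hS0 : S₁ = 0 ∧ S₂ = 0
  · obtain ⟨e1, e2⟩ := hS0
    rw [e1, e2]
    rw [hQsum] at hQpos
    have := mul_pos (by linarith : (0 : ℝ) < 1 - ρ) hQpos
    nlinarith
  · rw [not_and_or] at hS0
    have hμS : 0 ≤ μ * ((m₁ : ℝ) * (m₂ : ℝ) * (S₁ + S₂) ^ 2) :=
      mul_nonneg hμ0 (mul_nonneg (mul_nonneg hm₁0.le hm₂0.le) (sq_nonneg _))
    have hcs₁' : (m₂ : ℝ) * (1 - ρ) * S₁ ^ 2 ≤ (m₂ : ℝ) * (1 - ρ) * ((m₁ : ℝ) * Q₁) :=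
      mul_le_mul_of_nonneg_left hcs₁
        (mul_nonneg hm₂0.le (by linarith : (0 : ℝ) ≤ 1 - ρ))
    have hcs₂' : (m₁ : ℝ) * (1 - ρ) * S₂ ^ 2 ≤ (m₁ : ℝ) * (1 - ρ) * ((m₂ : ℝ) * Q₂) :=
      mul_le_mul_of_nonneg_left hcs₂
        (mul_nonneg hm₁0.le (by linarith : (0 : ℝ) ≤ 1 - ρ))
    have hmm : (0 : ℝ) < (m₁ : ℝ) * (m₂ : ℝ) := mul_pos hm₁0 hm₂0
    have hbig : 0 < (m₁ : ℝ) * (m₂ : ℝ)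
        * (μ * (S₁ + S₂) ^ 2 + (ρ - μ) * (S₁ ^ 2 + S₂ ^ 2) + (1 - ρ) * (Q₁ + Q₂)) := by
      rcases hS0 with hS0 | hS0
      · have hs : 0 < S₁ ^ 2 := lt_of_le_of_ne (sq_nonneg S₁) (Ne.symm (pow_ne_zero 2 hS0))
        have A := mul_pos hm₂0 (mul_pos h₁ hs)
        have B := mul_nonneg (mul_nonneg hm₁0.le h₂.le) (sq_nonneg S₂)
        linarith [A, B, hμS, hcs₁', hcs₂']
      · have hs : 0 < S₂ ^ 2 := lt_of_le_of_ne (sq_nonneg S₂) (Ne.symm (pow_ne_zero 2 hS0))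
        have A := mul_pos hm₁0 (mul_pos h₂ hs)
        have B := mul_nonneg (mul_nonneg hm₂0.le h₁.le) (sq_nonneg S₁)
        linarith [A, B, hμS, hcs₁', hcs₂']
    by_contra hcon
    push_neg at hcon
    have := mul_nonpos_of_nonneg_of_nonpos hmm.le hcon
    linarith
end

section
/- Let m ≥ 2, let 1 ≤ m₁, m₂ < m, and let ρ, μ′ ∈ [0,1) be such that either ρ > μ′, or m₁ = m₂ = 1 and 1+(m−2)ρ − (m−1)μ′ > 0. Then for every μ ∈ ℝ, det Q_{m,m₁,m₂}(ρ,μ′,μ) = det W_{m₁,m−m₁}(ρ,μ′) · det W_{m₂,m−m₂}(ρ,μ′) · ( 1 − μ² · (𝟙ᵀ W_{m₁,m−m₁}(ρ,μ′)^{−1} 𝟙) · (𝟙ᵀ W_{m₂,m−m₂}(ρ,μ′)^{−1} 𝟙) ), where 𝟙 denotes the all-ones vector in ℝ^m. -/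
open Matrix

/-- The matrix `W_{m₁, m - m₁}(ρ, μ')`, realized as an `m × m` matrix: diagonal entries `1`,
off-diagonal entries `ρ` when the two indices lie in the same block (`< m₁` or `≥ m₁`) and `μ'`
otherwise. -/
def WblkM (m m₁ : ℕ) (ρ μ' : ℝ) : Matrix (Fin m) (Fin m) ℝ :=
  Matrix.of fun i j =>
    if i = j then 1 else if ((i : ℕ) < m₁ ↔ (j : ℕ) < m₁) then ρ else μ'

/-- The `2m × 2m` matrix `Q_{m,m₁,m₂}(ρ,μ′,μ)`: diagonal blocks `W_{m₁,m-m₁}(ρ,μ′)` and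
`W_{m₂,m-m₂}(ρ,μ′)`, off-diagonal blocks `μ` times the all-ones matrix. -/
def Qmat (m m₁ m₂ : ℕ) (ρ μ' μ : ℝ) : Matrix (Fin (2 * m)) (Fin (2 * m)) ℝ :=
  Matrix.of fun i j =>
    if (i : ℕ) < m ∧ (j : ℕ) < m then
      (if (i : ℕ) = (j : ℕ) then 1 else if ((i : ℕ) < m₁ ↔ (j : ℕ) < m₁) then ρ else μ')
    else if m ≤ (i : ℕ) ∧ m ≤ (j : ℕ) then
      (if (i : ℕ) = (j : ℕ) then 1
        else if ((i : ℕ) - m < m₂ ↔ (j : ℕ) - m < m₂) then ρ else μ')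
    else μ

lemma Wblk_posDef_s9 (m k : ℕ) (hm : 2 ≤ m) (hk : 1 ≤ k) (hk' : k < m)
    {ρ μ' : ℝ} (hρ : ρ ∈ Set.Ico (0:ℝ) 1) (hμ' : μ' ∈ Set.Ico (0:ℝ) 1)
    (hcase : μ' < ρ ∨ (k = 1 ∧ 0 < 1 + ((m:ℝ)-2)*ρ - ((m:ℝ)-1)*μ')) :
    (WblkM m k ρ μ').PosDef := by
  obtain ⟨hρ0, hρ1⟩ := hρ
  obtain ⟨hμ0, hμ1⟩ := hμ'
  refine Matrix.PosDef.of_dotProduct_mulVec_pos ?_ ?_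
  · ext i j
    simp only [conjTranspose_apply, WblkM, of_apply, star_trivial]
    by_cases h : i = j
    · simp [h]
    · by_cases h2 : (i:ℕ) < k <;> by_cases h3 : (j:ℕ) < k <;>
        simp [h, Ne.symm h, h2, h3]
  · intro x hx
    set A : Finset (Fin m) := Finset.univ.filter (fun i : Fin m => (i:ℕ) < k) with hA
    set B : Finset (Fin m) := Finset.univ.filter (fun i : Fin m => ¬ (i:ℕ) < k) with hB
    set s1 : ℝ := ∑ i ∈ A, x i with hs1
    set s2 : ℝ := ∑ i ∈ B, x i with hs2
    set T : ℝ := ∑ i, (x i)^2 with hT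
    have hsum_split : ∀ f : Fin m → ℝ, (∑ i ∈ A, f i) + (∑ i ∈ B, f i) = ∑ i, f i := by
      intro f
      exact Finset.sum_filter_add_sum_filter_not _ _ _
    have hrow : ∀ i : Fin m, (∑ j, WblkM m k ρ μ' i j * x j) =
        (1-ρ) * x i + (ρ-μ') * (if (i:ℕ) < k then s1 else s2) + μ' * (s1+s2) := by
      intro i
      have h1 : ∀ j : Fin m, WblkM m k ρ μ' i j * x j =
          (1-ρ) * (if i = j then x j else 0)
            + (ρ-μ') * (if ((i:ℕ) < k ↔ (j:ℕ) < k) then x j else 0) + μ' * x j := by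
        intro j
        simp only [WblkM, of_apply]
        by_cases h : i = j
        · have : ((i:ℕ) < k ↔ (j:ℕ) < k) := by rw [h]
          simp [h, this]; ring
        · by_cases h2 : ((i:ℕ) < k ↔ (j:ℕ) < k) <;> simp [h, h2] <;> ring
      rw [Finset.sum_congr rfl (fun j _ => h1 j)]
      rw [Finset.sum_add_distrib, Finset.sum_add_distrib, ← Finset.mul_sum, ← Finset.mul_sum,
        ← Finset.mul_sum]
      have e1 : (∑ j, if i = j then x j else 0) = x i := by simp
      have e2 : (∑ j : Fin m, if ((i:ℕ) < k ↔ (j:ℕ) < k) then x j else 0)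
          = (if (i:ℕ) < k then s1 else s2) := by
        by_cases h : (i:ℕ) < k
        · simp only [h, if_true, true_iff]
          rw [hs1, hA, Finset.sum_filter]
        · simp only [h, if_false, false_iff, not_lt]
          rw [hs2, hB, Finset.sum_filter]
          congr 1; ext j; congr 1; simp [not_lt]
      have e3 : (∑ j, x j) = s1 + s2 := (hsum_split x).symm
      rw [e1, e2, e3]
    have hquad : star x ⬝ᵥ (WblkM m k ρ μ' *ᵥ x)
        = (1-ρ) * T + (ρ-μ') * (s1^2 + s2^2) + μ' * (s1+s2)^2 := by
      have step0 : star x ⬝ᵥ (WblkM m k ρ μ' *ᵥ x)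
          = ∑ i, x i * (∑ j, WblkM m k ρ μ' i j * x j) := by
        simp only [dotProduct, mulVec, star_trivial, Pi.star_apply]
      rw [step0, Finset.sum_congr rfl (fun i _ => by rw [hrow i])]
      have expand : ∀ i : Fin m, x i * ((1-ρ) * x i + (ρ-μ') * (if (i:ℕ) < k then s1 else s2) + μ' * (s1+s2))
          = (1-ρ) * (x i)^2 + (ρ-μ') * (x i * (if (i:ℕ) < k then s1 else s2)) + (μ' * (s1+s2)) * x i := by
        intro i; ring
      rw [Finset.sum_congr rfl (fun i _ => expand i)]
      rw [Finset.sum_add_distrib, Finset.sum_add_distrib, ← Finset.mul_sum, ← Finset.mul_sum,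
        ← Finset.mul_sum]
      have e4 : (∑ i : Fin m, x i * (if (i:ℕ) < k then s1 else s2)) = s1^2 + s2^2 := by
        rw [← hsum_split (fun i => x i * (if (i:ℕ) < k then s1 else s2))]
        have eA : (∑ i ∈ A, x i * (if (i:ℕ) < k then s1 else s2)) = s1 * s1 := by
          rw [Finset.sum_congr rfl (fun i hi => by
            simp only [hA, Finset.mem_filter] at hi
            rw [if_pos hi.2] : ∀ i ∈ A, x i * (if (i:ℕ) < k then s1 else s2) = x i * s1),
            ← Finset.sum_mul]
        have eB : (∑ i ∈ B, x i * (if (i:ℕ) < k then s1 else s2)) = s2 * s2 := by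
          rw [Finset.sum_congr rfl (fun i hi => by
            simp only [hB, Finset.mem_filter] at hi
            rw [if_neg hi.2] : ∀ i ∈ B, x i * (if (i:ℕ) < k then s1 else s2) = x i * s2),
            ← Finset.sum_mul]
        rw [eA, eB]; ring
      have e5 : (∑ i, x i) = s1 + s2 := (hsum_split x).symm
      rw [e4, e5, hT]; ring
    rw [hquad]
    -- positivity of T
    have hTpos : 0 < T := by
      obtain ⟨i, hi⟩ := Function.ne_iff.mp hx
      exact Finset.sum_pos' (fun j _ => sq_nonneg _) ⟨i, Finset.mem_univ i, sq_pos_of_ne_zero hi⟩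
    rcases hcase with hlt | ⟨hk1, hineq⟩
    · have h1 := mul_pos (show (0:ℝ) < 1 - ρ by linarith) hTpos
      have h2 : 0 ≤ (ρ-μ') * (s1^2+s2^2) := by
        apply mul_nonneg (by linarith); positivity
      have h3 : 0 ≤ μ' * (s1+s2)^2 := by positivity
      linarith
    · -- k = 1 case
      subst hk1
      set i0 : Fin m := ⟨0, by omega⟩ with hi0
      have hAe : A = {i0} := by
        ext i
        simp only [hA, Finset.mem_filter, Finset.mem_univ, true_and, Finset.mem_singleton,
          Fin.ext_iff, hi0]
        omega
      have hs1e : s1 = x i0 := by rw [hs1, hAe, Finset.sum_singleton]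
      set t2 : ℝ := ∑ i ∈ B, (x i)^2 with ht2def
      have hTeq : T = x i0 ^ 2 + t2 := by
        rw [hT, ← hsum_split (fun i => (x i)^2), hAe, Finset.sum_singleton]
      have ht2 : 0 ≤ t2 := Finset.sum_nonneg fun i _ => sq_nonneg _
      have hcardB : (B.card : ℝ) = (m:ℝ) - 1 := by
        have h1 : A.card + B.card = m := by
          rw [hA, hB]
          simpa using Finset.card_filter_add_card_filter_not
            (s := (Finset.univ : Finset (Fin m))) (p := fun i : Fin m => (i:ℕ) < 1)
        have h2 : A.card = 1 := by rw [hAe]; simp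
        have : B.card = m - 1 := by omega
        rw [this]
        have : 1 ≤ m := by omega
        push_cast [Nat.cast_sub this]
        ring
      have hcs : s2^2 ≤ ((m:ℝ) - 1) * t2 := by
        rw [← hcardB, hs2, ht2def]
        exact sq_sum_le_card_mul_sum_sq
      have hcR : (2:ℝ) ≤ (m:ℝ) := by exact_mod_cast hm
      have hTpos' : 0 < x i0 ^ 2 + t2 := hTeq ▸ hTpos
      rw [hs1e, hTeq]
      set a : ℝ := x i0 with ha
      rcases eq_or_ne s2 0 with h | h
      · rw [h]
        nlinarith [mul_nonneg hρ0 (sq_nonneg a), mul_nonneg hμ0 (sq_nonneg a),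
          mul_pos (show (0:ℝ) < 1 - ρ by linarith) hTpos',
          mul_nonneg (show (0:ℝ) ≤ ρ by linarith) ht2]
      · have hs2pos : 0 < s2^2 := sq_pos_of_ne_zero h
        have hμsq : μ'^2 ≤ μ' := by nlinarith
        have h1 : 0 ≤ (1-ρ) * (((m:ℝ)-1)*t2 - s2^2) :=
          mul_nonneg (by linarith) (by linarith)
        have h2 : 0 < (1 + ((m:ℝ)-2)*ρ - ((m:ℝ)-1)*μ'^2) * s2^2 := by
          apply mul_pos _ hs2pos
          nlinarith [mul_le_mul_of_nonneg_left hμsq (show (0:ℝ) ≤ (m:ℝ)-1 by linarith)]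
        have h3 : 0 ≤ ((m:ℝ)-1) * (a + μ'*s2)^2 :=
          mul_nonneg (by linarith) (sq_nonneg _)
        have hm1 : 0 < (m:ℝ)-1 := by linarith
        have hid : ((m:ℝ)-1) * ((1-ρ)*(a^2+t2) + (ρ-μ')*(a^2+s2^2) + μ'*(a+s2)^2)
            = ((m:ℝ)-1)*(a+μ'*s2)^2 + (1-ρ)*(((m:ℝ)-1)*t2 - s2^2)
              + (1 + ((m:ℝ)-2)*ρ - ((m:ℝ)-1)*μ'^2)*s2^2 := by ring
        have hkey : 0 < ((m:ℝ)-1) * ((1-ρ)*(a^2+t2) + (ρ-μ')*(a^2+s2^2) + μ'*(a+s2)^2) := by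
          rw [hid]; linarith
        by_contra hG
        push_neg at hG
        have := mul_nonpos_of_nonneg_of_nonpos hm1.le hG
        linarith

lemma det_sub_smul_ones (m : ℕ) (B : Matrix (Fin m) (Fin m) ℝ) (hB : IsUnit B.det) (c : ℝ) :
    (B - c • (Matrix.of fun _ _ => (1:ℝ))).det
      = B.det * (1 - c * ((fun _ => (1:ℝ)) ⬝ᵥ (B⁻¹ *ᵥ fun _ => (1:ℝ)))) := by
  set u : Fin m → ℝ := fun _ => (1:ℝ) with hu
  set w : Fin m → ℝ := -(c • (B⁻¹ *ᵥ u)) with hw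
  have hBw : B *ᵥ w = -(c • u) := by
    rw [hw, Matrix.mulVec_neg, Matrix.mulVec_smul, Matrix.mulVec_mulVec,
      Matrix.mul_nonsing_inv _ hB, Matrix.one_mulVec]
  have key : B - c • (Matrix.of fun _ _ => (1:ℝ)) = B * (1 + replicateCol Unit w * replicateRow Unit u) := by
    rw [Matrix.mul_add, Matrix.mul_one, ← Matrix.mul_assoc, ← replicateCol_mulVec, hBw]
    ext i j
    simp only [Matrix.sub_apply, Matrix.add_apply, Matrix.smul_apply, Matrix.of_apply,
      Matrix.mul_apply, Matrix.replicateCol_apply, Matrix.replicateRow_apply, Finset.univ_unique,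
      Finset.sum_singleton, Pi.neg_apply, Pi.smul_apply, smul_eq_mul, hu]
    ring
  rw [key, det_mul, det_one_add_replicateCol_mul_replicateRow]
  have hdot : u ⬝ᵥ w = -(c * (u ⬝ᵥ (B⁻¹ *ᵥ u))) := by
    rw [hw]
    simp only [dotProduct, Pi.neg_apply, Pi.smul_apply, smul_eq_mul, mul_neg,
      Finset.sum_neg_distrib, Finset.mul_sum, neg_inj]
    exact Finset.sum_congr rfl fun i _ => by ring
  rw [hdot]
  ring
lemma Qmat_eq_blocks (m m₁ m₂ : ℕ) (ρ μ' μ : ℝ) :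
    Qmat m m₁ m₂ ρ μ' μ =
      (fromBlocks (WblkM m m₁ ρ μ') (Matrix.of fun _ _ => μ)
        (Matrix.of fun _ _ => μ) (WblkM m m₂ ρ μ')).submatrix
        ((finCongr (two_mul m)).trans finSumFinEquiv.symm)
        ((finCongr (two_mul m)).trans finSumFinEquiv.symm) := by
  have he : ∀ i : Fin (2*m), ((finCongr (two_mul m)).trans finSumFinEquiv.symm) i
      = if h : (i:ℕ) < m then Sum.inl ⟨(i:ℕ), h⟩
        else Sum.inr ⟨(i:ℕ) - m, by omega⟩ := by
    intro i
    by_cases h : (i:ℕ) < m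
    · rw [dif_pos h]
      have h1 : (finCongr (two_mul m)) i = Fin.castAdd m ⟨(i:ℕ), h⟩ := by
        ext; simp
      rw [Equiv.trans_apply, h1, finSumFinEquiv_symm_apply_castAdd]
    · rw [dif_neg h]
      have h1 : (finCongr (two_mul m)) i = Fin.natAdd m ⟨(i:ℕ) - m, by omega⟩ := by
        ext; simp; omega
      rw [Equiv.trans_apply, h1, finSumFinEquiv_symm_apply_natAdd]
  ext i j
  rw [Matrix.submatrix_apply, he i, he j]
  by_cases hi : (i:ℕ) < m <;> by_cases hj : (j:ℕ) < m
  · rw [dif_pos hi, dif_pos hj]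
    simp only [fromBlocks_apply₁₁, Qmat, WblkM, Matrix.of_apply, Fin.ext_iff]
    rw [if_pos ⟨hi, hj⟩]
  · rw [dif_pos hi, dif_neg hj]
    simp only [fromBlocks_apply₁₂, Qmat, Matrix.of_apply]
    rw [if_neg (by omega), if_neg (by omega)]
  · rw [dif_neg hi, dif_pos hj]
    simp only [fromBlocks_apply₂₁, Qmat, Matrix.of_apply]
    rw [if_neg (by omega), if_neg (by omega)]
  · rw [dif_neg hi, dif_neg hj]
    simp only [fromBlocks_apply₂₂, Qmat, WblkM, Matrix.of_apply, Fin.ext_iff]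
    rw [if_neg (by omega), if_pos ⟨by omega, by omega⟩]
    have : ((i:ℕ) = (j:ℕ)) ↔ ((i:ℕ) - m = (j:ℕ) - m) := by omega
    rw [if_congr this rfl rfl]

/-- Determinant factorization for `Q_{m,m₁,m₂}(ρ,μ′,μ)`:
`det Q = det W_{m₁,m-m₁} ⬝ det W_{m₂,m-m₂} ⬝ (1 - μ² (𝟙ᵀ W_{m₁,m-m₁}⁻¹ 𝟙)(𝟙ᵀ W_{m₂,m-m₂}⁻¹ 𝟙))`. -/
theorem Qmat_det (m m₁ m₂ : ℕ) (hm : 2 ≤ m) (hm₁ : 1 ≤ m₁) (hm₁' : m₁ < m)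
    (hm₂ : 1 ≤ m₂) (hm₂' : m₂ < m) (ρ μ' : ℝ)
    (hρ : ρ ∈ Set.Ico (0 : ℝ) 1) (hμ' : μ' ∈ Set.Ico (0 : ℝ) 1)
    (hcase : μ' < ρ ∨
      (m₁ = 1 ∧ m₂ = 1 ∧ 0 < 1 + ((m : ℝ) - 2) * ρ - ((m : ℝ) - 1) * μ'))
    (μ : ℝ) :
    (Qmat m m₁ m₂ ρ μ' μ).det =
      (WblkM m m₁ ρ μ').det * (WblkM m m₂ ρ μ').det *
        (1 - μ ^ 2 *
          ((fun _ => (1 : ℝ)) ⬝ᵥ ((WblkM m m₁ ρ μ')⁻¹ *ᵥ fun _ => (1 : ℝ))) *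
          ((fun _ => (1 : ℝ)) ⬝ᵥ ((WblkM m m₂ ρ μ')⁻¹ *ᵥ fun _ => (1 : ℝ)))) := by
  have hApd : (WblkM m m₁ ρ μ').PosDef :=
    Wblk_posDef_s9 m m₁ hm hm₁ hm₁' hρ hμ'
      (hcase.imp id fun h => ⟨h.1, h.2.2⟩)
  have hBpd : (WblkM m m₂ ρ μ').PosDef :=
    Wblk_posDef_s9 m m₂ hm hm₂ hm₂' hρ hμ'
      (hcase.imp id fun h => ⟨h.2.1, h.2.2⟩)
  have hAdet : IsUnit (WblkM m m₁ ρ μ').det := hApd.det_pos.ne'.isUnit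
  have hBdet : IsUnit (WblkM m m₂ ρ μ').det := hBpd.det_pos.ne'.isUnit
  haveI : Invertible (WblkM m m₁ ρ μ') := (WblkM m m₁ ρ μ').invertibleOfIsUnitDet hAdet
  set A := WblkM m m₁ ρ μ' with hAdef
  set B := WblkM m m₂ ρ μ' with hBdef
  set u : Fin m → ℝ := fun _ => (1:ℝ) with hudef
  set C : Matrix (Fin m) (Fin m) ℝ := Matrix.of fun _ _ => μ with hCdef
  rw [Qmat_eq_blocks, Matrix.det_submatrix_equiv_self, Matrix.det_fromBlocks₁₁]
  have hCAC : C * ⅟A * C = (μ^2 * (u ⬝ᵥ (A⁻¹ *ᵥ u))) • (Matrix.of fun _ _ => (1:ℝ)) := by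
    rw [invOf_eq_nonsing_inv]
    ext i j
    simp only [Matrix.mul_apply, Matrix.smul_apply, Matrix.of_apply, hCdef, smul_eq_mul,
      mul_one, dotProduct, Matrix.mulVec, hudef, one_mul, mul_one]
    simp only [Finset.sum_mul, Finset.mul_sum]
    conv_lhs => rw [Finset.sum_comm]
    exact Finset.sum_congr rfl fun k _ => Finset.sum_congr rfl fun l _ => by ring
  rw [hCAC, det_sub_smul_ones m B hBdet]
  ring
end

section
/- Let m ≥ 2 and let ρ, μ′ ∈ [0,1) satisfy ρ > μ′. Then there exist constants δ > 0 and κ > 0, depending only on m, ρ, μ′, such that for every μ ∈ [0,δ] and every integer j with 1 ≤ j < m, the matrix Q_{m,j,j}(ρ,μ′,μ) is positive definite and every eigenvalue of Q_{m,j,j}(ρ,μ′,μ) is at most κ. -/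
open Matrix

def iA (m j : ℕ) (i : Fin (2*m)) : ℝ := if (i:ℕ) < j then 1 else 0
def iB (m j : ℕ) (i : Fin (2*m)) : ℝ := if ¬(i:ℕ) < j ∧ (i:ℕ) < m then 1 else 0
def iC (m j : ℕ) (i : Fin (2*m)) : ℝ := if ¬(i:ℕ) < m ∧ (i:ℕ) - m < j then 1 else 0
def iD (m j : ℕ) (i : Fin (2*m)) : ℝ := if ¬(i:ℕ) < m ∧ ¬(i:ℕ) - m < j then 1 else 0
def iH1 (m : ℕ) (i : Fin (2*m)) : ℝ := if (i:ℕ) < m then 1 else 0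
def iH2 (m : ℕ) (i : Fin (2*m)) : ℝ := if ¬(i:ℕ) < m then 1 else 0

set_option linter.unreachableTactic false in
set_option linter.unnecessarySeqFocus false in
set_option linter.unusedTactic false in
lemma Qmat_decomp (m j : ℕ) (hjm : j < m) (ρ μ' μ : ℝ) :
    Qmat m j j ρ μ' μ
      = (1-ρ) • (1 : Matrix (Fin (2*m)) (Fin (2*m)) ℝ)
        + μ • vecMulVec (fun _ => (1:ℝ)) (fun _ => (1:ℝ))
        + (μ'-μ) • (vecMulVec (iH1 m) (iH1 m) + vecMulVec (iH2 m) (iH2 m))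
        + (ρ-μ') • (vecMulVec (iA m j) (iA m j) + vecMulVec (iB m j) (iB m j)
            + vecMulVec (iC m j) (iC m j) + vecMulVec (iD m j) (iD m j)) := by
  ext i k
  simp only [Qmat, of_apply, Matrix.add_apply, Matrix.smul_apply, one_apply, vecMulVec_apply,
    iA, iB, iC, iD, iH1, iH2, smul_eq_mul, Fin.ext_iff, ← not_lt]
  by_cases h1 : (i:ℕ) < j <;> by_cases h2 : (i:ℕ) < m <;> by_cases h3 : (i:ℕ) - m < j <;>
    by_cases h4 : (k:ℕ) < j <;> by_cases h5 : (k:ℕ) < m <;> by_cases h6 : (k:ℕ) - m < j <;>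
    by_cases h7 : (i:ℕ) = (k:ℕ) <;>
    first
      | (exfalso; omega)
      | (simp only [h1, h2, h3, h4, h5, h6, h7, not_true, not_false_iff, true_and, false_and,
          and_true, and_false, if_true, if_false, iff_self, true_iff, false_iff,
          iff_true, iff_false, not_not, ite_true, ite_false, not_false_eq_true,
          and_self, eq_self_iff_true] <;> try ring) <;> (try omega) <;>
          (split_ifs <;> first | ring | omega)

lemma dot_vecMulVec {n : ℕ} (w v : Fin n → ℝ) :
    v ⬝ᵥ (vecMulVec w w) *ᵥ v = (w ⬝ᵥ v)^2 := by
  simp only [dotProduct, mulVec, vecMulVec_apply, sq, Finset.sum_mul_sum]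
  exact Finset.sum_congr rfl fun i _ => by
    rw [Finset.mul_sum]; exact Finset.sum_congr rfl fun k _ => by ring

lemma dot_sq_le {n : ℕ} (w v : Fin n → ℝ) (hw : ∀ i, w i = 0 ∨ w i = 1) :
    (w ⬝ᵥ v)^2 ≤ n * (v ⬝ᵥ v) := by
  have h1 := Finset.sum_mul_sq_le_sq_mul_sq Finset.univ w v
  have h2 : ∑ i, w i ^ 2 ≤ (n : ℝ) := by
    calc ∑ i, w i ^ 2 ≤ ∑ _i : Fin n, (1:ℝ) := by
          refine Finset.sum_le_sum fun i _ => ?_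
          rcases hw i with h | h <;> simp [h]
      _ = n := by simp
  have h3 : v ⬝ᵥ v = ∑ i, v i ^ 2 := by simp [dotProduct, sq]
  have h4 : (0:ℝ) ≤ ∑ i, v i ^ 2 := Finset.sum_nonneg fun i _ => sq_nonneg _
  calc (w ⬝ᵥ v)^2 ≤ (∑ i, w i ^ 2) * ∑ i, v i ^ 2 := h1
    _ ≤ n * (v ⬝ᵥ v) := by rw [h3]; exact mul_le_mul_of_nonneg_right h2 h4

lemma herm_vecMulVec {n : ℕ} (w : Fin n → ℝ) : (vecMulVec w w).IsHermitian := by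
  ext i k
  simp [vecMulVec_apply, conjTranspose_apply, mul_comm]

lemma herm_smul {n : ℕ} (c : ℝ) {M : Matrix (Fin n) (Fin n) ℝ} (h : M.IsHermitian) :
    (c • M).IsHermitian := by
  unfold Matrix.IsHermitian at *
  rw [conjTranspose_smul, h]
  simp

set_option linter.unreachableTactic false in
set_option linter.unusedTactic false in
lemma Qmat_quad (m j : ℕ) (hjm : j < m) (ρ μ' μ : ℝ) (v : Fin (2*m) → ℝ) :
    v ⬝ᵥ (Qmat m j j ρ μ' μ) *ᵥ v
      = (1-ρ) * (v ⬝ᵥ v) + μ * ((fun _ => (1:ℝ)) ⬝ᵥ v)^2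
        + (μ'-μ) * ((iH1 m ⬝ᵥ v)^2 + (iH2 m ⬝ᵥ v)^2)
        + (ρ-μ') * ((iA m j ⬝ᵥ v)^2 + (iB m j ⬝ᵥ v)^2
            + (iC m j ⬝ᵥ v)^2 + (iD m j ⬝ᵥ v)^2) := by
  rw [Qmat_decomp m j hjm]
  simp only [add_mulVec, smul_mulVec, dotProduct_add, dotProduct_smul, one_mulVec,
    dot_vecMulVec, smul_eq_mul]
  try ring

set_option maxHeartbeats 1000000 in
/-- For `m ≥ 2` and `ρ, μ′ ∈ [0,1)` with `ρ > μ′`, there are `δ > 0` and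
`κ > 0`, depending only on `m, ρ, μ′`, such that for all `μ ∈ [0,δ]` and all `1 ≤ j < m` the
matrix `Q_{m,j,j}(ρ,μ′,μ)` is positive definite with all eigenvalues at most `κ`. -/
theorem Qmat_posDef_eigenvalue_bound (m : ℕ) (hm : 2 ≤ m) (ρ μ' : ℝ)
    (hρ : ρ ∈ Set.Ico (0 : ℝ) 1) (hμ' : μ' ∈ Set.Ico (0 : ℝ) 1) (h : μ' < ρ) :
    ∃ δ > (0 : ℝ), ∃ κ > (0 : ℝ), ∀ μ ∈ Set.Icc (0 : ℝ) δ, ∀ j : ℕ, 1 ≤ j → j < m →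
      (Qmat m j j ρ μ' μ).PosDef ∧
      ∀ (κ' : ℝ) (v : Fin (2 * m) → ℝ), v ≠ 0 →
        (Qmat m j j ρ μ' μ).mulVec v = κ' • v → κ' ≤ κ := by
  obtain ⟨hρ0, hρ1⟩ := hρ
  obtain ⟨hμ'0, hμ'1⟩ := hμ'
  have hm0 : (0:ℝ) < m := by positivity
  have h1ρ : (0:ℝ) < 1 - ρ := by linarith
  refine ⟨μ' + (1-ρ)/(8*m), by positivity, 1 + 20*m, by positivity, ?_⟩
  intro μ hμ j hj1 hjm
  obtain ⟨hμ0, hμδ⟩ := hμ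
  -- bounds valid for every vector
  have key : ∀ v : Fin (2*m) → ℝ,
      (1-ρ)/2 * (v ⬝ᵥ v) ≤ v ⬝ᵥ (Qmat m j j ρ μ' μ) *ᵥ v ∧
      v ⬝ᵥ (Qmat m j j ρ μ' μ) *ᵥ v ≤ (1 + 20*m) * (v ⬝ᵥ v) := by
    intro v
    rw [Qmat_quad m j hjm]
    have hN : (0:ℝ) ≤ v ⬝ᵥ v := by
      simpa using dotProduct_self_star_nonneg v
    have cs1 : ((fun _ => (1:ℝ)) ⬝ᵥ v)^2 ≤ (2*m : ℕ) * (v ⬝ᵥ v) :=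
      dot_sq_le _ v (fun i => Or.inr rfl)
    have csH1 : (iH1 m ⬝ᵥ v)^2 ≤ (2*m : ℕ) * (v ⬝ᵥ v) :=
      dot_sq_le _ v (fun i => by unfold iH1; split <;> simp)
    have csH2 : (iH2 m ⬝ᵥ v)^2 ≤ (2*m : ℕ) * (v ⬝ᵥ v) :=
      dot_sq_le _ v (fun i => by unfold iH2; split <;> simp)
    have csA : (iA m j ⬝ᵥ v)^2 ≤ (2*m : ℕ) * (v ⬝ᵥ v) :=
      dot_sq_le _ v (fun i => by unfold iA; split <;> simp)
    have csB : (iB m j ⬝ᵥ v)^2 ≤ (2*m : ℕ) * (v ⬝ᵥ v) :=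
      dot_sq_le _ v (fun i => by unfold iB; split <;> simp)
    have csC : (iC m j ⬝ᵥ v)^2 ≤ (2*m : ℕ) * (v ⬝ᵥ v) :=
      dot_sq_le _ v (fun i => by unfold iC; split <;> simp)
    have csD : (iD m j ⬝ᵥ v)^2 ≤ (2*m : ℕ) * (v ⬝ᵥ v) :=
      dot_sq_le _ v (fun i => by unfold iD; split <;> simp)
    push_cast at cs1 csH1 csH2 csA csB csC csD
    set N := v ⬝ᵥ v with hNdef
    set S := (fun _ => (1:ℝ)) ⬝ᵥ v with hSdef
    set A := iA m j ⬝ᵥ v with hAdef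
    set B := iB m j ⬝ᵥ v with hBdef
    set C := iC m j ⬝ᵥ v with hCdef
    set D := iD m j ⬝ᵥ v with hDdef
    set H1 := iH1 m ⬝ᵥ v with hH1def
    set H2 := iH2 m ⬝ᵥ v with hH2def
    have hρμ' : (0:ℝ) < ρ - μ' := by linarith
    have hY : (0:ℝ) ≤ A^2 + B^2 + C^2 + D^2 := by positivity
    have hX0 : (0:ℝ) ≤ H1^2 + H2^2 := by positivity
    have hX4 : H1^2 + H2^2 ≤ 4*(m:ℝ)*N := by linarith
    have hδ : μ ≤ μ' + (1-ρ)/(8*m) := hμδ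
    constructor
    · -- lower bound
      have hkey : -((1-ρ)/2) * N ≤ (μ'-μ)*(H1^2+H2^2) := by
        rcases le_or_gt μ μ' with hc | hc
        · have h0 : 0 ≤ (μ'-μ)*(H1^2+H2^2) := mul_nonneg (by linarith) hX0
          have h1 : 0 ≤ ((1-ρ)/2) * N := mul_nonneg (by linarith) hN
          linarith
        · have h1 : -((1-ρ)/(8*m)) ≤ μ' - μ := by linarith
          have h2 : (μ'-μ) * (4*(m:ℝ)*N) ≤ (μ'-μ)*(H1^2+H2^2) :=
            mul_le_mul_of_nonpos_left hX4 (by linarith)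
          have h3 : -((1-ρ)/(8*m)) * (4*(m:ℝ)*N) ≤ (μ'-μ) * (4*(m:ℝ)*N) :=
            mul_le_mul_of_nonneg_right h1 (by positivity)
          have h4 : -((1-ρ)/(8*m)) * (4*(m:ℝ)*N) = -((1-ρ)/2) * N := by
            field_simp
            ring
          linarith
      have hμS : 0 ≤ μ * S^2 := mul_nonneg hμ0 (sq_nonneg _)
      have hρY : 0 ≤ (ρ-μ') * (A^2+B^2+C^2+D^2) := mul_nonneg hρμ'.le hY
      linarith
    · -- upper bound
      have hμ2 : μ ≤ 2 := by
        have hm1 : (1:ℝ) ≤ (m:ℝ) := by exact_mod_cast Nat.one_le_cast.mpr (by omega)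
        have h5 : (1-ρ)/(8*m) ≤ 1 := by
          rw [div_le_one (by positivity)]
          linarith
        linarith
      have u1 : (1-ρ)*N ≤ 1*N := mul_le_mul_of_nonneg_right (by linarith) hN
      have u2 : μ*S^2 ≤ 2*S^2 := mul_le_mul_of_nonneg_right hμ2 (sq_nonneg _)
      have u3 : (μ'-μ)*(H1^2+H2^2) ≤ 4*(m:ℝ)*N := by
        rcases le_or_gt 0 (μ'-μ) with hc | hc
        · have h6 : (μ'-μ)*(H1^2+H2^2) ≤ 1*(H1^2+H2^2) :=
            mul_le_mul_of_nonneg_right (by linarith) hX0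
          linarith
        · have h6 : (μ'-μ)*(H1^2+H2^2) ≤ 0 := mul_nonpos_of_nonpos_of_nonneg hc.le hX0
          have h7 : 0 ≤ 4*(m:ℝ)*N := by positivity
          linarith
      have u4 : (ρ-μ')*(A^2+B^2+C^2+D^2) ≤ 1*(A^2+B^2+C^2+D^2) :=
        mul_le_mul_of_nonneg_right (by linarith) hY
      have hmN : 0 ≤ (m:ℝ)*N := mul_nonneg hm0.le hN
      linarith
  constructor
  · refine posDef_iff_dotProduct_mulVec.mpr ?_
    constructor
    · rw [Qmat_decomp m j hjm]
      exact (((herm_smul _ isHermitian_one).add (herm_smul _ (herm_vecMulVec _))).add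
        (herm_smul _ ((herm_vecMulVec _).add (herm_vecMulVec _)))).add
        (herm_smul _ ((((herm_vecMulVec _).add (herm_vecMulVec _)).add
          (herm_vecMulVec _)).add (herm_vecMulVec _)))
    · intro x hx
      have hxx : 0 < x ⬝ᵥ x := by
        have := (Matrix.dotProduct_self_star_pos_iff (v := x)).2 hx
        simpa using this
      have hs : star x = x := rfl
      rw [hs]
      have := (key x).1
      nlinarith
  · intro κ' v hv hev
    have hvv : 0 < v ⬝ᵥ v := by
      have := (Matrix.dotProduct_self_star_pos_iff (v := v)).2 hv
      simpa using this
    have hq : v ⬝ᵥ (Qmat m j j ρ μ' μ) *ᵥ v = κ' * (v ⬝ᵥ v) := by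
      rw [hev, dotProduct_smul, smul_eq_mul]
    have := (key v).2
    rw [hq] at this
    exact le_of_mul_le_mul_right (by linarith) hvv
end

section
/- Let k ≥ 1 be an integer and let ρ₁, ρ₂ ∈ [0,1) satisfy 1+(2k+1)ρ₂ > (2k+2)ρ₁, so that the (2k+3)×(2k+3) matrix W_{2k+2,1}(ρ₂,ρ₁) is symmetric positive definite. Let Y be a random vector with law N(0, W_{2k+2,1}(ρ₂,ρ₁)), and set φ_k := (2k+3 + (2k+1)ρ₂ − (4k+4)ρ₁) / ( 2(1 + (2k+1)ρ₂ − (2k+2)ρ₁²) ). Then there exists a constant C ≥ 0, depending only on k, ρ₁, ρ₂, such that for every u > 0: P{Y ≥ u·1_{2k+3}} ≤ C u^{−(2k+3)} exp(−φ_k u²). -/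
open Matrix MeasureTheory

/-- The centered multivariate Gaussian measure `N(0, S)` on `ℝⁿ` (for `S` symmetric positive
definite), defined by its density `(2π)^(-n/2) (det S)^(-1/2) exp(-⟨x, S⁻¹ x⟩/2)` with respect to
Lebesgue measure. -/
noncomputable def gaussianOf (n : ℕ) (S : Matrix (Fin n) (Fin n) ℝ) :
    Measure (Fin n → ℝ) :=
  volume.withDensity fun x => ENNReal.ofReal
    ((2 * Real.pi) ^ (-(n : ℝ) / 2) * S.det ^ (-(1 : ℝ) / 2) *
      Real.exp (-(x ⬝ᵥ (S⁻¹ *ᵥ x)) / 2))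

section Aux

open Real Set Finset

lemma vmv {N : ℕ} (a b x : Fin N → ℝ) : Matrix.vecMulVec a b *ᵥ x = (b ⬝ᵥ x) • a := by
  funext j
  simp only [Matrix.mulVec, Matrix.vecMulVec_apply, dotProduct, Pi.smul_apply, smul_eq_mul,
    Finset.sum_mul]
  exact Finset.sum_congr rfl fun i _ => by ring

/-- within-block indicator vector -/
def eV (m : ℕ) : Fin (m+1) → ℝ := fun i => if (i:ℕ) < m then 1 else 0
/-- last-coordinate indicator vector -/
def fV (m : ℕ) : Fin (m+1) → ℝ := fun i => if (i:ℕ) < m then 0 else 1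

lemma W_decomp (m : ℕ) (ρ μ : ℝ) :
    Wblk m 1 ρ μ = (1-ρ) • (1 : Matrix (Fin (m+1)) (Fin (m+1)) ℝ)
      + ρ • (vecMulVec (eV m) (eV m) + vecMulVec (fV m) (fV m))
      + μ • (vecMulVec (eV m) (fV m) + vecMulVec (fV m) (eV m)) := by
  ext i j
  by_cases hij : i = j
  · subst hij
    by_cases hi : (i:ℕ) < m <;>
      simp [Wblk, eV, fV, Matrix.one_apply, hi, Matrix.add_apply, Matrix.smul_apply,
        Matrix.vecMulVec_apply, smul_eq_mul]
  · by_cases hi : (i:ℕ) < m <;> by_cases hj : (j:ℕ) < m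
    · simp [Wblk, eV, fV, Matrix.one_apply, hi, hj, hij, Matrix.add_apply, Matrix.smul_apply,
        Matrix.vecMulVec_apply, smul_eq_mul]
    · simp [Wblk, eV, fV, Matrix.one_apply, hi, hj, hij, Matrix.add_apply, Matrix.smul_apply,
        Matrix.vecMulVec_apply, smul_eq_mul]
    · simp [Wblk, eV, fV, Matrix.one_apply, hi, hj, hij, Matrix.add_apply, Matrix.smul_apply,
        Matrix.vecMulVec_apply, smul_eq_mul]
    · exfalso; apply hij; apply Fin.ext; omega

lemma W_qform (m : ℕ) (ρ μ : ℝ) (x : Fin (m+1) → ℝ) :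
    x ⬝ᵥ (Wblk m 1 ρ μ) *ᵥ x
      = (1-ρ) * (x ⬝ᵥ x) + ρ * ((eV m ⬝ᵥ x)^2 + (fV m ⬝ᵥ x)^2)
        + 2 * μ * (eV m ⬝ᵥ x) * (fV m ⬝ᵥ x) := by
  rw [W_decomp]
  simp only [Matrix.add_mulVec, Matrix.smul_mulVec, vmv, Matrix.one_mulVec,
    dotProduct_add, dotProduct_smul, smul_eq_mul, dotProduct_comm x (eV m),
    dotProduct_comm x (fV m)]
  ring

lemma eV_dot (m : ℕ) (x : Fin (m+1) → ℝ) :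
    eV m ⬝ᵥ x = ∑ i : Fin m, x i.castSucc := by
  rw [dotProduct, Fin.sum_univ_castSucc]
  simp [eV, Fin.is_lt]

lemma fV_dot (m : ℕ) (x : Fin (m+1) → ℝ) : fV m ⬝ᵥ x = x (Fin.last m) := by
  rw [dotProduct, Fin.sum_univ_castSucc]
  simp [fV, Fin.is_lt]

lemma self_dot (m : ℕ) (x : Fin (m+1) → ℝ) :
    x ⬝ᵥ x = (∑ i : Fin m, x i.castSucc ^ 2) + x (Fin.last m) ^ 2 := by
  rw [dotProduct, Fin.sum_univ_castSucc]
  simp [sq]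

lemma W_herm (m : ℕ) (ρ μ : ℝ) : (Wblk m 1 ρ μ).IsHermitian := by
  ext i j
  simp only [Matrix.conjTranspose_apply, Wblk, Matrix.of_apply, star_trivial]
  by_cases hij : i = j
  · subst hij; simp
  · have hji : ¬ j = i := fun hc => hij hc.symm
    simp only [hij, hji, if_false]
    by_cases hi : (i:ℕ) < m <;> by_cases hj : (j:ℕ) < m <;> simp [hi, hj]

lemma W_posdef (m : ℕ) (ρ₁ ρ₂ : ℝ) (hρ₁0 : 0 ≤ ρ₁) (hρ₁1 : ρ₁ < 1)
    (hρ₂0 : 0 ≤ ρ₂) (hρ₂1 : ρ₂ < 1) (hm : 1 ≤ m)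
    (h : (m:ℝ) * ρ₁ < 1 + ((m:ℝ)-1) * ρ₂) : (Wblk m 1 ρ₂ ρ₁).PosDef := by
  have hM : (0:ℝ) < m := by exact_mod_cast hm
  have hD : 0 < 1 + ((m:ℝ)-1)*ρ₂ - m*ρ₁^2 := by
    nlinarith [mul_nonneg hM.le (mul_nonneg hρ₁0 (by linarith : (0:ℝ) ≤ 1 - ρ₁))]
  set D := 1 + ((m:ℝ)-1)*ρ₂ - m*ρ₁^2 with hDdef
  set δ := min ((1-ρ₂)/2) (D/2) with hδdef
  have hδ0 : 0 < δ := lt_min (by linarith) (by linarith)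
  have hδ1 : δ ≤ (1-ρ₂)/2 := min_le_left _ _
  have hδ2 : δ ≤ D/2 := min_le_right _ _
  refine Matrix.PosDef.of_dotProduct_mulVec_pos (W_herm m ρ₂ ρ₁) fun x hx => ?_
  have hstar : star x = x := by simp
  rw [hstar, W_qform, eV_dot, fV_dot, self_dot]
  set Q := ∑ i : Fin m, x i.castSucc ^ 2 with hQdef
  set s := ∑ i : Fin m, x i.castSucc with hsdef
  set t := x (Fin.last m) with htdef
  have hQs : s^2 ≤ m * Q := by
    simpa [hQdef, hsdef, Fintype.card_fin] using
      sq_sum_le_card_mul_sum_sq (s := (Finset.univ : Finset (Fin m)))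
        (f := fun i => x i.castSucc)
  have hQ0 : 0 ≤ Q := Finset.sum_nonneg fun i _ => sq_nonneg _
  have key : δ*Q + ((D-δ)/m)*s^2 + (ρ₁*s+t)^2
      ≤ (1-ρ₂) * (Q + t^2) + ρ₂ * (s^2 + t^2) + 2*ρ₁*s*t := by
    have h1 : 0 ≤ (1-ρ₂-δ) * (Q - s^2/m) := by
      apply mul_nonneg (by linarith)
      rw [sub_nonneg, div_le_iff₀ hM]
      linarith [hQs]
    have h2 : (1-ρ₂) * (Q + t^2) + ρ₂ * (s^2 + t^2) + 2*ρ₁*s*t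
        - (δ*Q + ((D-δ)/m)*s^2 + (ρ₁*s+t)^2) = (1-ρ₂-δ) * (Q - s^2/m) := by
      field_simp
      ring
    linarith
  by_cases hQz : Q = 0
  · have hall : ∀ i : Fin m, x i.castSucc = 0 := by
      intro i
      have := (Finset.sum_eq_zero_iff_of_nonneg (fun i _ => sq_nonneg (x i.castSucc))).1
        hQz i (Finset.mem_univ i)
      exact pow_eq_zero_iff (n := 2) (by norm_num) |>.1 this
    have hs0 : s = 0 := Finset.sum_eq_zero fun i _ => hall i
    have ht0 : t ≠ 0 := by
      intro hc
      apply hx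
      funext j
      rcases Fin.eq_castSucc_or_eq_last j with ⟨i, rfl⟩ | rfl
      · exact hall i
      · exact hc
    have : 0 < (ρ₁*s+t)^2 := by
      rw [hs0]; simp only [mul_zero, zero_add]; positivity
    nlinarith [mul_nonneg hδ0.le hQ0, sq_nonneg s, div_nonneg (by linarith : (0:ℝ) ≤ D - δ) hM.le,
      mul_nonneg (div_nonneg (by linarith : (0:ℝ) ≤ D - δ) hM.le) (sq_nonneg s)]
  · have hQpos : 0 < Q := lt_of_le_of_ne hQ0 (Ne.symm hQz)
    nlinarith [mul_pos hδ0 hQpos, sq_nonneg (ρ₁*s+t),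
      mul_nonneg (div_nonneg (by linarith : (0:ℝ) ≤ D - δ) hM.le) (sq_nonneg s)]

lemma W_mulVec_eq_one (m : ℕ) (ρ₁ ρ₂ a b : ℝ)
    (ha : (1 + ((m:ℝ)-1)*ρ₂) * a + ρ₁ * b = 1)
    (hb : (m:ℝ)*ρ₁*a + b = 1) :
    Wblk m 1 ρ₂ ρ₁ *ᵥ (fun i => if (i:ℕ) < m then a else b) = fun _ => 1 := by
  set v : Fin (m+1) → ℝ := fun i => if (i:ℕ) < m then a else b with hv
  have hev : eV m ⬝ᵥ v = m * a := by
    rw [eV_dot]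
    simp [hv, Fin.is_lt, Finset.sum_const, Fintype.card_fin, nsmul_eq_mul]
  have hfv : fV m ⬝ᵥ v = b := by rw [fV_dot]; simp [hv]
  rw [W_decomp]
  funext i
  simp only [Matrix.add_mulVec, Matrix.smul_mulVec, vmv, Matrix.one_mulVec, hev, hfv,
    Pi.add_apply, Pi.smul_apply, smul_eq_mul]
  by_cases hi : (i:ℕ) < m
  · simp only [hv, eV, fV, hi, if_true]
    linear_combination ha
  · simp only [hv, eV, fV, hi, if_false]
    linear_combination hb

lemma tail_integral_eq (n : ℕ) (K lam u : ℝ) (hK : 0 ≤ K) (hlam : 0 < lam) :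
    ∫⁻ x in {x : Fin n → ℝ | ∀ i, u ≤ x i},
        ENNReal.ofReal (K * ∏ i, Real.exp (-lam * (x i - u)))
      = ENNReal.ofReal (K * (lam⁻¹)^n) := by
  set E : Set (Fin n → ℝ) := {x | ∀ i, u ≤ x i} with hE
  have hEm : MeasurableSet E := by
    have : E = Set.pi Set.univ (fun _ : Fin n => Ici u) := by
      ext x; simp [hE, Set.mem_pi, Pi.le_def]
    rw [this]
    exact MeasurableSet.univ_pi fun _ => measurableSet_Ici
  set F : ℝ → ℝ := (Ici u).indicator (fun r => Real.exp (-lam * (r - u))) with hF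
  have heq : (fun r : ℝ => Real.exp (-lam * (r - u)))
      = fun r => Real.exp (lam * u) * Real.exp (-lam * r) := by
    funext r; rw [← Real.exp_add]; ring_nf
  have hFint : Integrable F := by
    rw [hF, integrable_indicator_iff measurableSet_Ici,
      integrableOn_Ici_iff_integrableOn_Ioi, heq]
    exact (exp_neg_integrableOn_Ioi u hlam).const_mul _
  have hFval : ∫ r, F r = lam⁻¹ := by
    rw [hF, integral_indicator measurableSet_Ici, integral_Ici_eq_integral_Ioi, heq,
      integral_const_mul]
    have h2 : ∫ r in Ioi u, Real.exp (-lam * r) = lam⁻¹ • ∫ r in Ioi (lam * u), Real.exp (-r) :=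
      by simpa [neg_mul] using integral_comp_mul_left_Ioi (fun r => Real.exp (-r)) u hlam
    rw [h2, integral_exp_neg_Ioi, smul_eq_mul, ← mul_assoc, mul_comm (Real.exp (lam*u)) lam⁻¹,
      mul_assoc, ← Real.exp_add]
    simp
  set h : (Fin n → ℝ) → ℝ := fun x => K * ∏ i, Real.exp (-lam * (x i - u)) with hh
  have hGeq : E.indicator h = fun x => K * ∏ i, F (x i) := by
    funext x
    by_cases hx : x ∈ E
    · rw [Set.indicator_of_mem hx, hh, hF]
      exact congrArg (K * ·) (Finset.prod_congr rfl fun i _ =>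
        (Set.indicator_of_mem (show x i ∈ Ici u from hx i)
          (fun r => Real.exp (-lam * (r - u)))).symm)
    · rw [Set.indicator_of_notMem hx]
      obtain ⟨i, hi⟩ := not_forall.1 hx
      have : F (x i) = 0 := Set.indicator_of_notMem hi _
      rw [Finset.prod_eq_zero (Finset.mem_univ i) this, mul_zero]
  have hint : Integrable (E.indicator h) := by
    rw [hGeq]
    exact (Integrable.fintype_prod (f := fun _ : Fin n => F) fun _ => hFint).const_mul K
  have hnn : 0 ≤ᵐ[volume] E.indicator h := by
    refine Filter.Eventually.of_forall fun x => Set.indicator_nonneg (fun y _ => ?_) x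
    have : (0:ℝ) ≤ ∏ i, Real.exp (-lam * (y i - u)) :=
      Finset.prod_nonneg fun i _ => (Real.exp_pos _).le
    exact mul_nonneg hK this
  have step1 : ∫⁻ x in E, ENNReal.ofReal (h x) = ∫⁻ x, ENNReal.ofReal (E.indicator h x) := by
    rw [← lintegral_indicator hEm]
    congr 1
    funext x
    by_cases hx : x ∈ E <;> simp [hx]
  rw [step1, ← ofReal_integral_eq_lintegral_ofReal hint hnn, hGeq, integral_const_mul,
    volume_pi, integral_fintype_prod_eq_pow (ι := Fin n) F, hFval, Fintype.card_fin]

end Aux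

set_option maxHeartbeats 2000000 in
/-- For `Y ~ N(0, W_{2k+2,1}(ρ₂,ρ₁))` with `ρ₁, ρ₂ ∈ [0,1)` and
`1+(2k+1)ρ₂ > (2k+2)ρ₁`, setting
`φ_k = (2k+3+(2k+1)ρ₂-(4k+4)ρ₁)/(2(1+(2k+1)ρ₂-(2k+2)ρ₁²))`, there is a constant `C ≥ 0`
(depending only on `k, ρ₁, ρ₂`) with `P{Y ≥ u·1} ≤ C u^(-(2k+3)) exp(-φ_k u²)` for all
`u > 0`. -/
theorem gaussian_orthant_tail_upper_estimate (k : ℕ) (hk : 1 ≤ k) (ρ₁ ρ₂ : ℝ)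
    (hρ₁ : ρ₁ ∈ Set.Ico (0 : ℝ) 1) (hρ₂ : ρ₂ ∈ Set.Ico (0 : ℝ) 1)
    (h : (2 * (k : ℝ) + 2) * ρ₁ < 1 + (2 * (k : ℝ) + 1) * ρ₂) :
    ∃ C : ℝ, 0 ≤ C ∧ ∀ u : ℝ, 0 < u →
      (gaussianOf (2 * k + 2 + 1) (Wblk (2 * k + 2) 1 ρ₂ ρ₁) {x | ∀ i, u ≤ x i}).toReal ≤
        C * u ^ (-(2 * (k : ℝ) + 3)) *
          Real.exp (-((2 * (k : ℝ) + 3 + (2 * (k : ℝ) + 1) * ρ₂ - (4 * (k : ℝ) + 4) * ρ₁) /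
            (2 * (1 + (2 * (k : ℝ) + 1) * ρ₂ - (2 * (k : ℝ) + 2) * ρ₁ ^ 2)) * u ^ 2)) := by
  obtain ⟨hρ₁0, hρ₁1⟩ := hρ₁
  obtain ⟨hρ₂0, hρ₂1⟩ := hρ₂
  set m : ℕ := 2 * k + 2 with hmdef
  have hm : 1 ≤ m := by omega
  have hMc : ((m:ℕ):ℝ) = 2*(k:ℝ)+2 := by rw [hmdef]; push_cast; ring
  have hM : (0:ℝ) < (m:ℝ) := by rw [hMc]; positivity
  have h' : (m:ℝ) * ρ₁ < 1 + ((m:ℝ)-1) * ρ₂ := by rw [hMc]; ring_nf; ring_nf at h; linarith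
  have hD : 0 < 1 + ((m:ℝ)-1)*ρ₂ - m*ρ₁^2 := by
    nlinarith [mul_nonneg hM.le (mul_nonneg hρ₁0 (by linarith : (0:ℝ) ≤ 1 - ρ₁))]
  set D : ℝ := 1 + ((m:ℝ)-1)*ρ₂ - m*ρ₁^2 with hDdef
  set a : ℝ := (1-ρ₁)/D with hadef
  set b : ℝ := (1 + ((m:ℝ)-1)*ρ₂ - m*ρ₁)/D with hbdef
  have ha0 : 0 < a := div_pos (by linarith) hD
  have hb0 : 0 < b := div_pos (by linarith) hD
  set c : ℝ := min a b with hcdef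
  have hc0 : 0 < c := lt_min ha0 hb0
  set S : Matrix (Fin (m+1)) (Fin (m+1)) ℝ := Wblk m 1 ρ₂ ρ₁ with hSdef
  have hSpd : S.PosDef := W_posdef m ρ₁ ρ₂ hρ₁0 hρ₁1 hρ₂0 hρ₂1 hm h'
  have hdet : 0 < S.det := hSpd.det_pos
  set v : Fin (m+1) → ℝ := fun i => if (i:ℕ) < m then a else b with hvdef
  have hSv : S *ᵥ v = fun _ => 1 := by
    rw [hSdef, hvdef]
    exact W_mulVec_eq_one m ρ₁ ρ₂ a b
      (by rw [hadef, hbdef]; field_simp; ring) (by rw [hadef, hbdef]; field_simp; ring)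
  have hAone : S⁻¹ *ᵥ (fun _ => (1:ℝ)) = v := by
    rw [← hSv, Matrix.mulVec_mulVec, Matrix.nonsing_inv_mul S hdet.ne'.isUnit,
      Matrix.one_mulVec]
  have hSt : Sᵀ = S := by
    ext i j
    rw [Matrix.transpose_apply, ← star_trivial (S j i), ← Matrix.conjTranspose_apply,
      hSdef, W_herm m ρ₂ ρ₁]
  have hAt : (S⁻¹)ᵀ = S⁻¹ := by rw [Matrix.transpose_nonsing_inv, hSt]
  have hdotsym : ∀ z : Fin (m+1) → ℝ, (fun _ => (1:ℝ)) ⬝ᵥ (S⁻¹ *ᵥ z) = v ⬝ᵥ z := by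
    intro z
    rw [Matrix.dotProduct_mulVec, ← Matrix.mulVec_transpose, hAt, hAone]
  have hpsd : ∀ z : Fin (m+1) → ℝ, 0 ≤ z ⬝ᵥ S⁻¹ *ᵥ z := by
    intro z
    have := hSpd.inv.posSemidef.dotProduct_mulVec_nonneg z
    simpa using this
  have hov : (fun _ : Fin (m+1) => (1:ℝ)) ⬝ᵥ v = m*a+b := by
    rw [dotProduct, Fin.sum_univ_castSucc]
    simp [hvdef, Fin.is_lt, Finset.sum_const, Fintype.card_fin, nsmul_eq_mul]
  -- the constant
  set c₀ : ℝ := (2 * Real.pi) ^ (-((m+1 : ℕ) : ℝ) / 2) * S.det ^ (-(1 : ℝ) / 2) with hc₀def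
  have hc₀0 : 0 ≤ c₀ := by
    apply mul_nonneg (Real.rpow_nonneg (by positivity) _) (Real.rpow_nonneg hdet.le _)
  refine ⟨c₀ * (c⁻¹)^(m+1), by positivity, fun u hu => ?_⟩
  set E : Set (Fin (m+1) → ℝ) := {x | ∀ i, u ≤ x i} with hEdef
  have hEm : MeasurableSet E := by
    have : E = Set.pi Set.univ (fun _ : Fin (m+1) => Set.Ici u) := by
      ext x; simp [hEdef, Set.mem_pi, Pi.le_def]
    rw [this]
    exact MeasurableSet.univ_pi fun _ => measurableSet_Ici
  set K : ℝ := c₀ * Real.exp (-(((m:ℝ)*a+b) * u^2) / 2) with hKdef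
  have hK0 : 0 ≤ K := mul_nonneg hc₀0 (Real.exp_pos _).le
  -- quadratic form lower bound on E
  have hquad : ∀ x : Fin (m+1) → ℝ, x ∈ E →
      ((m:ℝ)*a+b)*u^2 + 2*(c*u) * (∑ i, (x i - u)) ≤ x ⬝ᵥ S⁻¹ *ᵥ x := by
    intro x hx
    set y : Fin (m+1) → ℝ := fun i => x i - u with hydef
    have hxy : x = (u • (fun _ : Fin (m+1) => (1:ℝ))) + y := by
      funext i; simp [hydef]
    have expand : x ⬝ᵥ S⁻¹ *ᵥ x
        = u^2 * ((m:ℝ)*a+b) + 2*u*(v ⬝ᵥ y) + y ⬝ᵥ S⁻¹ *ᵥ y := by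
      conv_lhs => rw [hxy]
      rw [Matrix.mulVec_add, Matrix.mulVec_smul, hAone]
      simp only [dotProduct_add, add_dotProduct, smul_dotProduct, dotProduct_smul,
        smul_eq_mul, hov, hdotsym y, dotProduct_comm y v]
      ring
    have hvy : c * (∑ i, y i) ≤ v ⬝ᵥ y := by
      rw [dotProduct, Finset.mul_sum]
      apply Finset.sum_le_sum
      intro i _
      have hyi : 0 ≤ y i := sub_nonneg.2 (hx i)
      have hvi : c ≤ v i := by
        by_cases hi : (i:ℕ) < m
        · simp only [hvdef, hi, if_true]; rw [hcdef]; exact min_le_left a b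
        · simp only [hvdef, hi, if_false]; rw [hcdef]; exact min_le_right a b
      exact mul_le_mul_of_nonneg_right hvi hyi
    have h2u : 2*u*(c * (∑ i, y i)) ≤ 2*u*(v ⬝ᵥ y) :=
      mul_le_mul_of_nonneg_left hvy (by positivity)
    have hyy := hpsd y
    have hsum : (∑ i, (x i - u)) = ∑ i, y i := rfl
    rw [hsum]
    rw [expand]
    have hrr : 2*(c*u)*(∑ i, y i) = 2*u*(c*(∑ i, y i)) := by ring
    linarith [h2u, hyy]
  -- pointwise bound of the density
  have hpoint : ∀ x ∈ E,
      ENNReal.ofReal ((2 * Real.pi) ^ (-((m+1 : ℕ) : ℝ) / 2) * S.det ^ (-(1 : ℝ) / 2) *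
          Real.exp (-(x ⬝ᵥ (S⁻¹ *ᵥ x)) / 2))
        ≤ ENNReal.ofReal (K * ∏ i, Real.exp (-(c*u) * (x i - u))) := by
    intro x hx
    apply ENNReal.ofReal_le_ofReal
    have hR : K * ∏ i, Real.exp (-(c*u) * (x i - u))
        = c₀ * Real.exp (-(((m:ℝ)*a+b) * u^2) / 2 + ∑ i, -(c*u) * (x i - u)) := by
      rw [← Real.exp_sum, hKdef, Real.exp_add]; ring
    rw [hR]
    apply mul_le_mul_of_nonneg_left _ hc₀0
    apply Real.exp_le_exp.2
    have hsum : (∑ i, -(c*u) * (x i - u)) = -((c*u) * (∑ i, (x i - u))) := by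
      rw [← Finset.mul_sum]; ring
    rw [hsum]
    have := hquad x hx
    linarith
  -- main computation
  have hmeas : (gaussianOf (m+1) S E)
      = ∫⁻ x in E, ENNReal.ofReal ((2 * Real.pi) ^ (-((m+1 : ℕ) : ℝ) / 2) *
          S.det ^ (-(1 : ℝ) / 2) * Real.exp (-(x ⬝ᵥ (S⁻¹ *ᵥ x)) / 2)) := by
    rw [gaussianOf, withDensity_apply _ hEm]
  have hle : (gaussianOf (m+1) S E) ≤ ENNReal.ofReal (K * (((c*u))⁻¹)^(m+1)) := by
    rw [hmeas]
    calc ∫⁻ x in E, ENNReal.ofReal ((2 * Real.pi) ^ (-((m+1 : ℕ) : ℝ) / 2) *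
          S.det ^ (-(1 : ℝ) / 2) * Real.exp (-(x ⬝ᵥ (S⁻¹ *ᵥ x)) / 2))
        ≤ ∫⁻ x in E, ENNReal.ofReal (K * ∏ i, Real.exp (-(c*u) * (x i - u))) := by
          apply lintegral_mono_ae
          exact (ae_restrict_iff' hEm).2 (Filter.Eventually.of_forall hpoint)
      _ = ENNReal.ofReal (K * (((c*u))⁻¹)^(m+1)) :=
          tail_integral_eq (m+1) K (c*u) u hK0 (mul_pos hc0 hu)
  have htoReal : (gaussianOf (m+1) S E).toReal ≤ K * ((c*u)⁻¹)^(m+1) := by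
    have := ENNReal.toReal_mono ENNReal.ofReal_ne_top hle
    rwa [ENNReal.toReal_ofReal (by positivity)] at this
  refine le_trans htoReal (le_of_eq ?_)
  -- final algebra
  have hrpow : u ^ (-(2*(k:ℝ)+3)) = (u⁻¹)^(m+1) := by
    have h1 : (-(2*(k:ℝ)+3)) = -(((m+1 : ℕ)):ℝ) := by rw [hmdef]; push_cast; ring
    rw [h1, Real.rpow_neg hu.le, Real.rpow_natCast, ← inv_pow]
  have hphi : ((m:ℝ)*a+b)/2
      = (2 * (k : ℝ) + 3 + (2 * (k : ℝ) + 1) * ρ₂ - (4 * (k : ℝ) + 4) * ρ₁) /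
        (2 * (1 + (2 * (k : ℝ) + 1) * ρ₂ - (2 * (k : ℝ) + 2) * ρ₁ ^ 2)) := by
    have hden : (1 + (2*(k:ℝ)+1)*ρ₂ - (2*(k:ℝ)+2)*ρ₁^2) = D := by rw [hDdef, hMc]; ring
    have hden0 : (1 + (2*(k:ℝ)+1)*ρ₂ - (2*(k:ℝ)+2)*ρ₁^2) ≠ 0 := by rw [hden]; exact hD.ne'
    rw [hadef, hbdef, hMc, ← hden]
    field_simp
    ring
  have hexp : Real.exp (-(((m:ℝ)*a+b) * u^2) / 2)
      = Real.exp (-((2 * (k : ℝ) + 3 + (2 * (k : ℝ) + 1) * ρ₂ - (4 * (k : ℝ) + 4) * ρ₁) /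
          (2 * (1 + (2 * (k : ℝ) + 1) * ρ₂ - (2 * (k : ℝ) + 2) * ρ₁ ^ 2)) * u ^ 2)) := by
    congr 1
    rw [← hphi]
    ring
  rw [hKdef, hexp, hrpow, mul_inv, mul_pow]
  ring
end
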